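/- For every signed CRT excursion (g,s), the map φ_{g,s} : [0,1] → [0,1] defined by φ_{g,s}(t) = Leb{u ∈ [0,1] : u ⊲ t} preserves Lebesgue measure, i.e. the pushforward of Lebesgue measure on [0,1] under φ_{g,s} is Lebesgue measure. Consequently μ_{g,s} = (Id, φ_{g,s})_* Leb is a permuton (a measure on [0,1]² with uniform marginals). -/

import Mathlib

open MeasureTheory Set

noncomputable section

/-- `x` is not a one-sided minimum of `g`. -/
def NotOneSidedMin (g : ℝ → ℝ) (x : ℝ) : Prop :=
  x ∈ Set.Ioo (0:ℝ) 1 ∧ ∀ ε > 0, (∃ x₁ ∈ Set.Ioo (x-ε) x, g x₁ < g x) ∧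
    (∃ x₂ ∈ Set.Ioo x (x+ε), g x₂ < g x)

/-- `b` is an inner local minimum of `g`. -/
def IsInnerLocalMin (g : ℝ → ℝ) (b : ℝ) : Prop :=
  b ∈ Set.Ioo (0:ℝ) 1 ∧ ∃ ε > 0, ∀ x ∈ Set.Ioo (b-ε) (b+ε), g b ≤ g x

/-- `b` is a strict (inner) local minimum of `g`. -/
def IsStrictLocalMin (g : ℝ → ℝ) (b : ℝ) : Prop :=
  b ∈ Set.Ioo (0:ℝ) 1 ∧ ∃ ε > 0, ∀ x ∈ Set.Ioo (b-ε) (b+ε), x ≠ b → g b < g x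

/-- A CRT excursion. -/
structure IsCRT (g : ℝ → ℝ) : Prop where
  cont : ContinuousOn g (Set.Icc 0 1)
  nonneg : ∀ t ∈ Set.Icc (0:ℝ) 1, 0 ≤ g t
  pos : ∀ t ∈ Set.Ioo (0:ℝ) 1, 0 < g t
  zero0 : g 0 = 0
  zero1 : g 1 = 0
  dense_min : ∀ x ∈ Set.Icc (0:ℝ) 1, x ∈ closure {b | IsInnerLocalMin g b}
  distinct : ∀ b b', IsInnerLocalMin g b → IsInnerLocalMin g b' → g b = g b' → b = b'
  leaves_full : volume {x | NotOneSidedMin g x} = 1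

/-- `β` is the unique minimum point of `g` on `[x,y]`, lies in `(x,y)`,
and is a strict local minimum: the most recent common ancestor of `x < y`. -/
def IsMrca (g : ℝ → ℝ) (β x y : ℝ) : Prop :=
  x < y ∧ β ∈ Set.Ioo x y ∧ IsStrictLocalMin g β ∧
    (∀ t ∈ Set.Icc x y, g β ≤ g t) ∧ (∀ t ∈ Set.Icc x y, g t = g β → t = β)

/-- `x` and `y` are `g`-comparable. -/
def GComparable (g : ℝ → ℝ) (x y : ℝ) : Prop :=
  ∃ β, IsMrca g β (min x y) (max x y)

/-- `b` enumerates (injectively) the strict local minima of `g`. -/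
def IsEnum (g : ℝ → ℝ) (b : ℕ → ℝ) : Prop :=
  Function.Injective b ∧ ∀ β, IsStrictLocalMin g β ↔ ∃ i, b i = β

/-- The sign-shuffled comparison relation `u ⊲ v` : if the mrca of `u,v` carries
sign `⊕` (`true`) then the smaller goes first, otherwise the bigger goes first. -/
def Tri (g : ℝ → ℝ) (b : ℕ → ℝ) (s : ℕ → Bool) (u v : ℝ) : Prop :=
  ∃ i, (IsMrca g (b i) u v ∧ s i = true) ∨ (IsMrca g (b i) v u ∧ s i = false)

/-- The measure-preserving function `φ_{g,s}`. -/
def phi (g : ℝ → ℝ) (b : ℕ → ℝ) (s : ℕ → Bool) (t : ℝ) : ℝ :=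
  (volume {u ∈ Set.Icc (0:ℝ) 1 | Tri g b s u t}).toReal

def aPt (g : ℝ → ℝ) (β : ℝ) : ℝ := sSup {t | t < β ∧ g t = g β}
def cPt (g : ℝ → ℝ) (β : ℝ) : ℝ := sInf {t | β < t ∧ g t = g β}

def aI (g : ℝ → ℝ) (b : ℕ → ℝ) (i : ℕ) : ℝ := aPt g (b i)
def cI (g : ℝ → ℝ) (b : ℕ → ℝ) (i : ℕ) : ℝ := cPt g (b i)
def aI' (g : ℝ → ℝ) (b : ℕ → ℝ) (s : ℕ → Bool) (i : ℕ) : ℝ := phi g b s (aI g b i)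
def cI' (g : ℝ → ℝ) (b : ℕ → ℝ) (s : ℕ → Bool) (i : ℕ) : ℝ :=
  aI' g b s i + (cI g b i - aI g b i)
def bI' (g : ℝ → ℝ) (b : ℕ → ℝ) (s : ℕ → Bool) (i : ℕ) : ℝ :=
  aI' g b s i + (if s i then b i - aI g b i else cI g b i - b i)

/-- The permuton `μ_{g,s} = (Id, φ_{g,s})_* Leb`. -/
def permuton (g : ℝ → ℝ) (b : ℕ → ℝ) (s : ℕ → Bool) : Measure (ℝ × ℝ) :=
  Measure.map (fun t => (t, phi g b s t)) (volume.restrict (Set.Icc 0 1))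

/-- Property (A) of a signed excursion. -/
def PropA (g : ℝ → ℝ) (b : ℕ → ℝ) (s : ℕ → Bool) : Prop :=
  ∀ i j, i ≠ j →
    Set.Icc (aI' g b s j) (cI' g b s j) ⊆ Set.Icc (aI' g b s i) (cI' g b s i) →
    (∀ y ∈ Set.Icc (g (b i)) (g (b j)),
      y ∈ closure {h | ∃ l, h = g (b l) ∧
        Set.Icc (aI' g b s l) (cI' g b s l) ⊆ Set.Icc (aI' g b s i) (cI' g b s i) ∧
        Set.Icc (aI' g b s j) (cI' g b s j) ⊆ Set.Icc (bI' g b s l) (cI' g b s l)}) ∧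
    (∀ y ∈ Set.Icc (g (b i)) (g (b j)),
      y ∈ closure {h | ∃ l, h = g (b l) ∧
        Set.Icc (aI' g b s l) (cI' g b s l) ⊆ Set.Icc (aI' g b s i) (cI' g b s i) ∧
        Set.Icc (aI' g b s j) (cI' g b s j) ⊆ Set.Icc (aI' g b s l) (bI' g b s l)})

/-- The shuffled excursion `f_{g,s}`. -/
def fShuffle (g : ℝ → ℝ) (b : ℕ → ℝ) (s : ℕ → Bool) (t : ℝ) : ℝ :=
  ⨆ i, Set.indicator (Set.Icc (aI' g b s i) (cI' g b s i)) (fun _ => g (b i)) t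

/-- Topological support of a measure. -/
def mSupport {α : Type*} [TopologicalSpace α] [MeasurableSpace α] (μ : Measure α) : Set α :=
  {x | ∀ U : Set α, IsOpen U → x ∈ U → μ U ≠ 0}

open scoped ENNReal

namespace CRTShuffle

variable {g : ℝ → ℝ} {β : ℝ}

lemma inner_of_strict (h : IsStrictLocalMin g β) : IsInnerLocalMin g β := by
  obtain ⟨hm, ε, hε, hstr⟩ := h
  refine ⟨hm, ε, hε, fun x hx => ?_⟩
  by_cases hxβ : x = β
  · subst hxβ; exact le_rfl
  · exact (hstr x hx hxβ).le

lemma strict_of_inner (hg : IsCRT g) (h : IsInnerLocalMin g β) : IsStrictLocalMin g β := by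
  obtain ⟨⟨h0, h1⟩, ε₀, hε₀, hmin⟩ := h
  refine ⟨⟨h0, h1⟩, min ε₀ (min β (1-β)), lt_min hε₀ (lt_min h0 (by linarith)), ?_⟩
  intro x hx hne
  have hεle : min ε₀ (min β (1-β)) ≤ ε₀ := min_le_left _ _
  have hεβ : min ε₀ (min β (1-β)) ≤ β := le_trans (min_le_right _ _) (min_le_left _ _)
  have hεβ' : min ε₀ (min β (1-β)) ≤ 1 - β := le_trans (min_le_right _ _) (min_le_right _ _)
  obtain ⟨hx1, hx2⟩ := hx
  have hx0 : 0 < x := by linarith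
  have hx1' : x < 1 := by linarith
  have hxe : x ∈ Ioo (β - ε₀) (β + ε₀) := ⟨by linarith, by linarith⟩
  rcases (hmin x hxe).lt_or_eq with hlt | heq
  · exact hlt
  · exfalso
    have hd1 : x - β ≤ |x - β| := le_abs_self _
    have hd2 : -|x - β| ≤ x - β := neg_abs_le _
    have habs : |x - β| < ε₀ := abs_lt.2 ⟨by linarith, by linarith⟩
    have hxinner : IsInnerLocalMin g x := by
      refine ⟨⟨hx0, hx1'⟩, ε₀ - |x - β|, by linarith, ?_⟩
      intro y hy
      have : y ∈ Ioo (β - ε₀) (β + ε₀) := ⟨by linarith [hy.1], by linarith [hy.2]⟩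
      calc g x = g β := heq.symm
        _ ≤ g y := hmin y this
    exact hne (hg.distinct x β hxinner ⟨⟨h0, h1⟩, ε₀, hε₀, hmin⟩ heq.symm)

lemma slm_val_ne (hg : IsCRT g) {β₁ β₂ : ℝ} (h1 : IsStrictLocalMin g β₁)
    (h2 : IsStrictLocalMin g β₂) (hne : β₁ ≠ β₂) : g β₁ ≠ g β₂ :=
  fun heq => hne (hg.distinct _ _ (inner_of_strict h1) (inner_of_strict h2) heq)

lemma slm_eps (h : IsStrictLocalMin g β) :
    ∃ ε > 0, ε ≤ β ∧ ε ≤ 1 - β ∧ ∀ x ∈ Ioo (β-ε) (β+ε), x ≠ β → g β < g x := by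
  obtain ⟨⟨h0, h1⟩, ε₀, hε₀, hstr⟩ := h
  refine ⟨min ε₀ (min β (1-β)), lt_min hε₀ (lt_min h0 (by linarith)),
    le_trans (min_le_right _ _) (min_le_left _ _),
    le_trans (min_le_right _ _) (min_le_right _ _), ?_⟩
  intro x hx hne
  have hεle : min ε₀ (min β (1-β)) ≤ ε₀ := min_le_left _ _
  exact hstr x ⟨by linarith [hx.1], by linarith [hx.2]⟩ hne

/-- left endpoint of the excursion of `β`. -/
def AA (g : ℝ → ℝ) (β : ℝ) : ℝ := sSup {u | u ∈ Icc (0:ℝ) 1 ∧ u < β ∧ g u = g β}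

/-- right endpoint of the excursion of `β`. -/
def CC (g : ℝ → ℝ) (β : ℝ) : ℝ := sInf {u | u ∈ Icc (0:ℝ) 1 ∧ β < u ∧ g u = g β}

lemma AA_spec (hg : IsCRT g) (h : IsStrictLocalMin g β) :
    AA g β ∈ Icc (0:ℝ) 1 ∧ AA g β < β ∧ g (AA g β) = g β ∧
      ∀ w ∈ Ioo (AA g β) β, g β < g w := by
  obtain ⟨ε, hε, hεβ, hεβ', hstr⟩ := slm_eps h
  have hβ01 : β ∈ Ioo (0:ℝ) 1 := h.1
  have hgβpos : 0 < g β := hg.pos β hβ01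
  set M : Set ℝ := {u | u ∈ Icc (0:ℝ) 1 ∧ u < β ∧ g u = g β} with hM
  have hMsub : M ⊆ Icc 0 (β - ε) := by
    rintro u ⟨hu01, huβ, hgu⟩
    refine ⟨hu01.1, ?_⟩
    by_contra hcon
    push_neg at hcon
    have := hstr u ⟨by linarith, by linarith⟩ (ne_of_lt huβ)
    linarith
  have hMbdd : BddAbove M := ⟨β - ε, fun u hu => (hMsub hu).2⟩
  have hMeq : M = (Icc 0 1 ∩ g ⁻¹' {g β}) ∩ Iic (β - ε) := by
    ext u
    constructor
    · intro hu; exact ⟨⟨hu.1, hu.2.2⟩, (hMsub hu).2⟩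
    · rintro ⟨⟨h01, hpre⟩, hle⟩
      exact ⟨h01, lt_of_le_of_lt (mem_Iic.mp hle) (by linarith), hpre⟩
  have hMclosed : IsClosed M := by
    rw [hMeq]
    exact (hg.cont.preimage_isClosed_of_isClosed isClosed_Icc isClosed_singleton).inter isClosed_Iic
  have hMne : M.Nonempty := by
    have hβ' : β - ε/2 ∈ Ioo (β - ε) (β + ε) := ⟨by linarith, by linarith⟩
    have hgβ' : g β < g (β - ε/2) := hstr _ hβ' (ne_of_lt (by linarith))
    have hsub : Icc (0:ℝ) (β - ε/2) ⊆ Icc 0 1 := Icc_subset_Icc le_rfl (by linarith [hβ01.2])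
    have hIVT := intermediate_value_Icc (by linarith : (0:ℝ) ≤ β - ε/2) (hg.cont.mono hsub)
    have hmem : g β ∈ Icc (g 0) (g (β - ε/2)) := by
      rw [hg.zero0]; exact ⟨hgβpos.le, hgβ'.le⟩
    obtain ⟨u, hu, hgu⟩ := hIVT hmem
    exact ⟨u, ⟨hu.1, le_trans hu.2 (by linarith [hβ01.2])⟩, lt_of_le_of_lt hu.2 (by linarith), hgu⟩
  have hMcpt : IsCompact M := isCompact_Icc.of_isClosed_subset hMclosed (fun u hu => hu.1)
  have hmem : AA g β ∈ M := hMcpt.sSup_mem hMne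
  obtain ⟨hA01, hAβ, hgA⟩ := hmem
  refine ⟨hA01, hAβ, hgA, ?_⟩
  intro w hw
  by_contra hcon
  push_neg at hcon
  have hw01 : w ∈ Icc (0:ℝ) 1 := ⟨le_trans hA01.1 hw.1.le, le_trans hw.2.le hβ01.2.le⟩
  rcases hcon.lt_or_eq with hlt | heq
  · set K : Set ℝ := {z | z ∈ Icc w β ∧ g z = g β} with hK
    have hKsub : K ⊆ Icc w β := fun z hz => hz.1
    have hKclosed : IsClosed K := by
      have hKeq : K = (Icc 0 1 ∩ g ⁻¹' {g β}) ∩ Icc w β := by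
        ext z
        constructor
        · intro hz
          exact ⟨⟨⟨le_trans hw01.1 hz.1.1, le_trans hz.1.2 hβ01.2.le⟩, hz.2⟩, hz.1⟩
        · rintro ⟨⟨_, hpre⟩, hzwβ⟩; exact ⟨hzwβ, hpre⟩
      rw [hKeq]
      exact (hg.cont.preimage_isClosed_of_isClosed isClosed_Icc isClosed_singleton).inter isClosed_Icc
    have hKcpt : IsCompact K := isCompact_Icc.of_isClosed_subset hKclosed hKsub
    have hKne : K.Nonempty := ⟨β, ⟨hw.2.le, le_rfl⟩, rfl⟩
    have hminK := hKcpt.sInf_mem hKne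
    set m := sInf K with hm
    rcases (hminK.1.2 : m ≤ β).lt_or_eq with hmβ | hmβ
    · have hmM : m ∈ M :=
        ⟨⟨le_trans hw01.1 hminK.1.1, le_trans hminK.1.2 hβ01.2.le⟩, hmβ, hminK.2⟩
      have h1 : m ≤ AA g β := le_csSup hMbdd hmM
      have h2 : AA g β < m := lt_of_lt_of_le hw.1 hminK.1.1
      linarith
    · have hlow : ∀ z ∈ Ico w β, g z < g β := by
        intro z hz
        have hzne : g z ≠ g β := by
          intro hzeq
          have : m ≤ z := csInf_le hKcpt.bddBelow ⟨⟨hz.1, hz.2.le⟩, hzeq⟩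
          rw [hmβ] at this
          linarith [hz.2]
        rcases lt_or_gt_of_ne hzne with h' | h'
        · exact h'
        · exfalso
          have hwz : w ≤ z := hz.1
          have hsub2 : Icc w z ⊆ Icc (0:ℝ) 1 :=
            Icc_subset_Icc hw01.1 (le_trans hz.2.le hβ01.2.le)
          obtain ⟨z', hz', hgz'⟩ :=
            intermediate_value_Icc hwz (hg.cont.mono hsub2) ⟨hlt.le, h'.le⟩
          have : m ≤ z' := csInf_le hKcpt.bddBelow ⟨⟨hz'.1, le_trans hz'.2 hz.2.le⟩, hgz'⟩
          rw [hmβ] at this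
          linarith [hz'.2, hz.2]
      have hz₀ : max w (β - ε/2) ∈ Ico w β := ⟨le_max_left _ _, max_lt hw.2 (by linarith)⟩
      have h1 := hlow _ hz₀
      have h2 := hstr (max w (β - ε/2))
        ⟨lt_of_lt_of_le (by linarith) (le_max_right _ _), lt_of_le_of_lt (hz₀.2.le) (by linarith)⟩
        (ne_of_lt hz₀.2)
      linarith
  · have hwM : w ∈ M := ⟨hw01, hw.2, heq⟩
    have : w ≤ AA g β := le_csSup hMbdd hwM
    linarith [hw.1]

lemma CC_spec (hg : IsCRT g) (h : IsStrictLocalMin g β) :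
    CC g β ∈ Icc (0:ℝ) 1 ∧ β < CC g β ∧ g (CC g β) = g β ∧
      ∀ w ∈ Ioo β (CC g β), g β < g w := by
  obtain ⟨ε, hε, hεβ, hεβ', hstr⟩ := slm_eps h
  have hβ01 : β ∈ Ioo (0:ℝ) 1 := h.1
  have hgβpos : 0 < g β := hg.pos β hβ01
  set M : Set ℝ := {u | u ∈ Icc (0:ℝ) 1 ∧ β < u ∧ g u = g β} with hM
  have hMsub : M ⊆ Icc (β + ε) 1 := by
    rintro u ⟨hu01, huβ, hgu⟩
    refine ⟨?_, hu01.2⟩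
    by_contra hcon
    push_neg at hcon
    have := hstr u ⟨by linarith, by linarith⟩ (ne_of_gt huβ)
    linarith
  have hMbdd : BddBelow M := ⟨β + ε, fun u hu => (hMsub hu).1⟩
  have hMeq : M = (Icc 0 1 ∩ g ⁻¹' {g β}) ∩ Ici (β + ε) := by
    ext u
    constructor
    · intro hu; exact ⟨⟨hu.1, hu.2.2⟩, (hMsub hu).1⟩
    · rintro ⟨⟨h01, hpre⟩, hle⟩
      exact ⟨h01, lt_of_lt_of_le (by linarith) (mem_Ici.mp hle), hpre⟩
  have hMclosed : IsClosed M := by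
    rw [hMeq]
    exact (hg.cont.preimage_isClosed_of_isClosed isClosed_Icc isClosed_singleton).inter isClosed_Ici
  have hMne : M.Nonempty := by
    have hβ' : β + ε/2 ∈ Ioo (β - ε) (β + ε) := ⟨by linarith, by linarith⟩
    have hgβ' : g β < g (β + ε/2) := hstr _ hβ' (ne_of_gt (by linarith))
    have hsub : Icc (β + ε/2) 1 ⊆ Icc (0:ℝ) 1 := Icc_subset_Icc (by linarith [hβ01.1]) le_rfl
    have hIVT := intermediate_value_Icc' (by linarith [hβ01.2] : β + ε/2 ≤ 1) (hg.cont.mono hsub)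
    have hmem : g β ∈ Icc (g 1) (g (β + ε/2)) := by
      rw [hg.zero1]; exact ⟨hgβpos.le, hgβ'.le⟩
    obtain ⟨u, hu, hgu⟩ := hIVT hmem
    exact ⟨u, ⟨le_trans (by linarith [hβ01.1]) hu.1, hu.2⟩, lt_of_lt_of_le (by linarith) hu.1, hgu⟩
  have hMcpt : IsCompact M := isCompact_Icc.of_isClosed_subset hMclosed (fun u hu => hu.1)
  have hmem : CC g β ∈ M := hMcpt.sInf_mem hMne
  obtain ⟨hC01, hCβ, hgC⟩ := hmem
  refine ⟨hC01, hCβ, hgC, ?_⟩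
  intro w hw
  by_contra hcon
  push_neg at hcon
  have hw01 : w ∈ Icc (0:ℝ) 1 := ⟨le_trans hβ01.1.le hw.1.le, le_trans hw.2.le hC01.2⟩
  rcases hcon.lt_or_eq with hlt | heq
  · set K : Set ℝ := {z | z ∈ Icc β w ∧ g z = g β} with hK
    have hKsub : K ⊆ Icc β w := fun z hz => hz.1
    have hKclosed : IsClosed K := by
      have hKeq : K = (Icc 0 1 ∩ g ⁻¹' {g β}) ∩ Icc β w := by
        ext z
        constructor
        · intro hz
          exact ⟨⟨⟨le_trans hβ01.1.le hz.1.1, le_trans hz.1.2 hw01.2⟩, hz.2⟩, hz.1⟩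
        · rintro ⟨⟨_, hpre⟩, hzβw⟩; exact ⟨hzβw, hpre⟩
      rw [hKeq]
      exact (hg.cont.preimage_isClosed_of_isClosed isClosed_Icc isClosed_singleton).inter isClosed_Icc
    have hKcpt : IsCompact K := isCompact_Icc.of_isClosed_subset hKclosed hKsub
    have hKne : K.Nonempty := ⟨β, ⟨le_rfl, hw.1.le⟩, rfl⟩
    have hmaxK := hKcpt.sSup_mem hKne
    set m := sSup K with hm
    rcases (hmaxK.1.1 : β ≤ m).lt_or_eq with hmβ | hmβ
    · have hmM : m ∈ M :=
        ⟨⟨le_trans hβ01.1.le hmaxK.1.1, le_trans hmaxK.1.2 hw01.2⟩, hmβ, hmaxK.2⟩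
      have h1 : CC g β ≤ m := csInf_le hMbdd hmM
      have h2 : m < CC g β := lt_of_le_of_lt hmaxK.1.2 hw.2
      linarith
    · have hlow : ∀ z ∈ Ioc β w, g z < g β := by
        intro z hz
        have hzne : g z ≠ g β := by
          intro hzeq
          have : z ≤ m := le_csSup hKcpt.bddAbove ⟨⟨hz.1.le, hz.2⟩, hzeq⟩
          rw [← hmβ] at this
          linarith [hz.1]
        rcases lt_or_gt_of_ne hzne with h' | h'
        · exact h'
        · exfalso
          have hzw : z ≤ w := hz.2
          have hsub2 : Icc z w ⊆ Icc (0:ℝ) 1 :=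
            Icc_subset_Icc (le_trans hβ01.1.le hz.1.le) hw01.2
          obtain ⟨z', hz', hgz'⟩ :=
            intermediate_value_Icc' hzw (hg.cont.mono hsub2) ⟨hlt.le, h'.le⟩
          have : z' ≤ m := le_csSup hKcpt.bddAbove ⟨⟨le_trans hz.1.le hz'.1, hz'.2⟩, hgz'⟩
          rw [← hmβ] at this
          linarith [hz'.1, hz.1]
      have hz₀ : min w (β + ε/2) ∈ Ioc β w := ⟨lt_min hw.1 (by linarith), min_le_left _ _⟩
      have h1 := hlow _ hz₀
      have h2 := hstr (min w (β + ε/2))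
        ⟨lt_of_lt_of_le (by linarith) hz₀.1.le, lt_of_le_of_lt (min_le_right _ _) (by linarith)⟩
        (ne_of_gt hz₀.1)
      linarith
  · have hwM : w ∈ M := ⟨hw01, hw.1, heq⟩
    have : CC g β ≤ w := csInf_le hMbdd hwM
    linarith [hw.2]

lemma exc_gt (hg : IsCRT g) (h : IsStrictLocalMin g β) :
    ∀ w ∈ Ioo (AA g β) (CC g β), w ≠ β → g β < g w := by
  intro w hw hne
  rcases lt_trichotomy w β with hlt | heq | hgt
  · exact (AA_spec hg h).2.2.2 w ⟨hw.1, hlt⟩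
  · exact absurd heq hne
  · exact (CC_spec hg h).2.2.2 w ⟨hgt, hw.2⟩

lemma exc_ge (hg : IsCRT g) (h : IsStrictLocalMin g β) :
    ∀ w ∈ Ioo (AA g β) (CC g β), g β ≤ g w := by
  intro w hw
  by_cases hne : w = β
  · subst hne; exact le_rfl
  · exact (exc_gt hg h w hw hne).le

lemma L_subset_exc (hg : IsCRT g) (h : IsStrictLocalMin g β) :
    Ioo (AA g β) β ⊆ Ioo (AA g β) (CC g β) :=
  Ioo_subset_Ioo le_rfl (CC_spec hg h).2.1.le

lemma R_subset_exc (hg : IsCRT g) (h : IsStrictLocalMin g β) :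
    Ioo β (CC g β) ⊆ Ioo (AA g β) (CC g β) :=
  Ioo_subset_Ioo (AA_spec hg h).2.1.le le_rfl

lemma mrca_iff (hg : IsCRT g) (h : IsStrictLocalMin g β) {u v : ℝ} :
    IsMrca g β u v ↔ u ∈ Ioo (AA g β) β ∧ v ∈ Ioo β (CC g β) := by
  have hA := AA_spec hg h
  have hC := CC_spec hg h
  constructor
  · rintro ⟨huv, hβmem, -, hmin, huniq⟩
    refine ⟨⟨?_, hβmem.1⟩, hβmem.2, ?_⟩
    · by_contra hcon
      push_neg at hcon
      have hmemA : AA g β ∈ Icc u v := ⟨hcon, by linarith [hA.2.1, hβmem.2]⟩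
      have := huniq _ hmemA hA.2.2.1
      linarith [hA.2.1]
    · by_contra hcon
      push_neg at hcon
      have hmemC : CC g β ∈ Icc u v := ⟨by linarith [hβmem.1, hC.2.1], hcon⟩
      have := huniq _ hmemC hC.2.2.1
      linarith [hC.2.1]
  · rintro ⟨hu, hv⟩
    have huv : u < v := lt_trans hu.2 hv.1
    refine ⟨huv, ⟨hu.2, hv.1⟩, h, ?_, ?_⟩
    · intro t ht
      exact exc_ge hg h t ⟨lt_of_lt_of_le hu.1 ht.1, lt_of_le_of_lt ht.2 hv.2⟩
    · intro t ht hgt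
      by_contra hne
      exact absurd hgt
        (ne_of_gt (exc_gt hg h t ⟨lt_of_lt_of_le hu.1 ht.1, lt_of_le_of_lt ht.2 hv.2⟩ hne))

variable {b : ℕ → ℝ} {s : ℕ → Bool}

lemma tri_iff (hg : IsCRT g) {u v : ℝ} :
    Tri g b s u v ↔ ∃ i, IsStrictLocalMin g (b i) ∧
      ((s i = true ∧ u ∈ Ioo (AA g (b i)) (b i) ∧ v ∈ Ioo (b i) (CC g (b i))) ∨
       (s i = false ∧ v ∈ Ioo (AA g (b i)) (b i) ∧ u ∈ Ioo (b i) (CC g (b i)))) := by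
  constructor
  · rintro ⟨i, ⟨hm, hsi⟩ | ⟨hm, hsi⟩⟩
    · have hS : IsStrictLocalMin g (b i) := hm.2.2.1
      obtain ⟨hL, hR⟩ := (mrca_iff hg hS).1 hm
      exact ⟨i, hS, Or.inl ⟨hsi, hL, hR⟩⟩
    · have hS : IsStrictLocalMin g (b i) := hm.2.2.1
      obtain ⟨hL, hR⟩ := (mrca_iff hg hS).1 hm
      exact ⟨i, hS, Or.inr ⟨hsi, hL, hR⟩⟩
  · rintro ⟨i, hS, ⟨hsi, hL, hR⟩ | ⟨hsi, hL, hR⟩⟩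
    · exact ⟨i, Or.inl ⟨(mrca_iff hg hS).2 ⟨hL, hR⟩, hsi⟩⟩
    · exact ⟨i, Or.inr ⟨(mrca_iff hg hS).2 ⟨hL, hR⟩, hsi⟩⟩

lemma nest (hg : IsCRT g) {β₁ β₂ : ℝ} (h1 : IsStrictLocalMin g β₁)
    (h2 : IsStrictLocalMin g β₂) (hlt : g β₁ < g β₂) {x : ℝ}
    (hx2 : x ∈ Ioo (AA g β₂) (CC g β₂)) :
    (x ∈ Ioo (AA g β₁) β₁ → Ioo (AA g β₂) (CC g β₂) ⊆ Ioo (AA g β₁) β₁) ∧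
    (x ∈ Ioo β₁ (CC g β₁) → Ioo (AA g β₂) (CC g β₂) ⊆ Ioo β₁ (CC g β₁)) := by
  have hA1 := AA_spec hg h1
  have hC1 := CC_spec hg h1
  have hnotβ₁ : β₁ ∉ Ioo (AA g β₂) (CC g β₂) := by
    intro hmem
    have := exc_ge hg h2 β₁ hmem
    linarith
  have hsub : x ∈ Ioo (AA g β₁) (CC g β₁) →
      Ioo (AA g β₂) (CC g β₂) ⊆ Ioo (AA g β₁) (CC g β₁) := by
    intro hx1 y hy
    constructor
    · by_contra hcon
      push_neg at hcon
      have hmem : AA g β₁ ∈ Ioo (AA g β₂) (CC g β₂) :=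
        ⟨lt_of_lt_of_le hy.1 hcon, lt_trans hx1.1 hx2.2⟩
      have hge := exc_gt hg h2 _ hmem (by
        intro heq
        have h' : g (AA g β₁) = g β₁ := hA1.2.2.1
        rw [heq] at h'
        linarith)
      rw [hA1.2.2.1] at hge
      linarith
    · by_contra hcon
      push_neg at hcon
      have hmem : CC g β₁ ∈ Ioo (AA g β₂) (CC g β₂) :=
        ⟨lt_of_le_of_lt (le_of_lt hx2.1) hx1.2, lt_of_le_of_lt hcon hy.2⟩
      have hge := exc_gt hg h2 _ hmem (by
        intro heq
        have : g β₂ = g β₁ := by rw [← heq]; exact hC1.2.2.1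
        linarith)
      rw [hC1.2.2.1] at hge
      linarith
  constructor
  · intro hx1
    have hsub' := hsub ⟨hx1.1, lt_trans hx1.2 hC1.2.1⟩
    intro y hy
    have hy1 := hsub' hy
    refine ⟨hy1.1, ?_⟩
    rcases lt_trichotomy y β₁ with h' | h' | h'
    · exact h'
    · exact absurd (h' ▸ hy) hnotβ₁
    · exact absurd (⟨lt_trans hx2.1 hx1.2, lt_trans h' hy.2⟩ : β₁ ∈ Ioo (AA g β₂) (CC g β₂)) hnotβ₁
  · intro hx1
    have hsub' := hsub ⟨lt_trans hA1.2.1 hx1.1, hx1.2⟩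
    intro y hy
    have hy1 := hsub' hy
    refine ⟨?_, hy1.2⟩
    rcases lt_trichotomy y β₁ with h' | h' | h'
    · exact absurd (⟨lt_trans hy.1 h', lt_trans hx1.1 hx2.2⟩ : β₁ ∈ Ioo (AA g β₂) (CC g β₂)) hnotβ₁
    · exact absurd (h' ▸ hy) hnotβ₁
    · exact h'

lemma tri_irrefl {u : ℝ} (h : Tri g b s u u) : False := by
  obtain ⟨i, ⟨hm, -⟩ | ⟨hm, -⟩⟩ := h <;> exact lt_irrefl u hm.1

lemma mrca_unique {β β' x y : ℝ} (h : IsMrca g β x y) (h' : IsMrca g β' x y) : β = β' := by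
  have hββ' : g β ≤ g β' := h.2.2.2.1 β' ⟨h'.2.1.1.le, h'.2.1.2.le⟩
  have hβ'β : g β' ≤ g β := h'.2.2.2.1 β ⟨h.2.1.1.le, h.2.1.2.le⟩
  exact (h.2.2.2.2 β' ⟨h'.2.1.1.le, h'.2.1.2.le⟩ (le_antisymm hβ'β hββ')).symm

lemma tri_antisymm (hbinj : Function.Injective b) {u v : ℝ}
    (h : Tri g b s u v) (h' : Tri g b s v u) : False := by
  obtain ⟨i, hi⟩ := h
  obtain ⟨j, hj⟩ := h'
  rcases hi with ⟨hi1, hsi⟩ | ⟨hi1, hsi⟩ <;> rcases hj with ⟨hj1, hsj⟩ | ⟨hj1, hsj⟩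
  · exact absurd hj1.1 (asymm hi1.1)
  · have hij : i = j := hbinj (mrca_unique hi1 hj1)
    rw [hij] at hsi
    exact Bool.noConfusion (hsi.symm.trans hsj)
  · have hij : i = j := hbinj (mrca_unique hi1 hj1)
    rw [hij] at hsi
    exact Bool.noConfusion (hsj.symm.trans hsi)
  · exact absurd hj1.1 (asymm hi1.1)

lemma tri_trans (hg : IsCRT g) (hbinj : Function.Injective b) {u t v : ℝ}
    (h1 : Tri g b s u t) (h2 : Tri g b s t v) : Tri g b s u v := by
  rw [tri_iff hg] at h1 h2 ⊢
  obtain ⟨i, hSi, hi⟩ := h1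
  obtain ⟨j, hSj, hj⟩ := h2
  by_cases hij : i = j
  · subst hij
    exfalso
    rcases hi with ⟨hsi, hiL, hiR⟩ | ⟨hsi, hiL, hiR⟩ <;>
      rcases hj with ⟨hsj, hjL, hjR⟩ | ⟨hsj, hjL, hjR⟩
    · exact absurd hjL.2 (not_lt.2 hiR.1.le)
    · exact Bool.noConfusion (hsi.symm.trans hsj)
    · exact Bool.noConfusion (hsj.symm.trans hsi)
    · exact absurd hjR.1 (not_lt.2 hiL.2.le)
  · have hne : b i ≠ b j := fun h => hij (hbinj h)
    have hvalne := slm_val_ne hg hSi hSj hne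
    have hti : t ∈ Ioo (AA g (b i)) (CC g (b i)) := by
      rcases hi with ⟨-, -, hiR⟩ | ⟨-, hiL, -⟩
      · exact R_subset_exc hg hSi hiR
      · exact L_subset_exc hg hSi hiL
    have htj : t ∈ Ioo (AA g (b j)) (CC g (b j)) := by
      rcases hj with ⟨-, hjL, -⟩ | ⟨-, -, hjR⟩
      · exact L_subset_exc hg hSj hjL
      · exact R_subset_exc hg hSj hjR
    have hvj : v ∈ Ioo (AA g (b j)) (CC g (b j)) := by
      rcases hj with ⟨-, -, hjR⟩ | ⟨-, hjL, -⟩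
      · exact R_subset_exc hg hSj hjR
      · exact L_subset_exc hg hSj hjL
    have hui : u ∈ Ioo (AA g (b i)) (CC g (b i)) := by
      rcases hi with ⟨-, hiL, -⟩ | ⟨-, -, hiR⟩
      · exact L_subset_exc hg hSi hiL
      · exact R_subset_exc hg hSi hiR
    rcases lt_or_gt_of_ne hvalne with hlt | hlt
    · have hnest := nest hg hSi hSj hlt htj
      rcases hi with ⟨hsi, huL, htR⟩ | ⟨hsi, htL, huR⟩
      · exact ⟨i, hSi, Or.inl ⟨hsi, huL, hnest.2 htR hvj⟩⟩
      · exact ⟨i, hSi, Or.inr ⟨hsi, hnest.1 htL hvj, huR⟩⟩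
    · have hnest := nest hg hSj hSi hlt hti
      rcases hj with ⟨hsj, htL, hvR⟩ | ⟨hsj, hvL, htR⟩
      · exact ⟨j, hSj, Or.inl ⟨hsj, hnest.1 htL hui, hvR⟩⟩
      · exact ⟨j, hSj, Or.inr ⟨hsj, hvL, hnest.2 htR hui⟩⟩

lemma exists_mrca (hg : IsCRT g) {u t : ℝ} (hu : NotOneSidedMin g u)
    (ht : NotOneSidedMin g t) (hut : u < t) : ∃ β, IsMrca g β u t := by
  obtain ⟨hu01, huprop⟩ := hu
  obtain ⟨ht01, htprop⟩ := ht
  have hsub : Icc u t ⊆ Icc (0:ℝ) 1 := Icc_subset_Icc hu01.1.le ht01.2.le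
  obtain ⟨β, hβmem, hβmin⟩ :=
    isCompact_Icc.exists_isMinOn (nonempty_Icc.2 hut.le) (hg.cont.mono hsub)
  obtain ⟨-, x₂, hx₂mem, hx₂⟩ := huprop (t - u) (by linarith)
  have hx₂' : x₂ ∈ Icc u t := ⟨hx₂mem.1.le, by linarith [hx₂mem.2]⟩
  have hminu : g β < g u := lt_of_le_of_lt (hβmin hx₂') hx₂
  obtain ⟨x₁, hx₁mem, hx₁⟩ := (htprop (t - u) (by linarith)).1
  have hx₁' : x₁ ∈ Icc u t := ⟨by linarith [hx₁mem.1], hx₁mem.2.le⟩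
  have hmint : g β < g t := lt_of_le_of_lt (hβmin hx₁') hx₁
  have hβuv : β ∈ Ioo u t := by
    constructor
    · rcases hβmem.1.lt_or_eq with h' | h'
      · exact h'
      · exfalso; rw [← h'] at hminu; exact lt_irrefl _ hminu
    · rcases hβmem.2.lt_or_eq with h' | h'
      · exact h'
      · exfalso; rw [h'] at hmint; exact lt_irrefl _ hmint
  have hinner : ∀ z ∈ Ioo u t, g z = g β → IsInnerLocalMin g z := by
    intro z hz hgz
    refine ⟨⟨lt_trans hu01.1 hz.1, lt_trans hz.2 ht01.2⟩, min (z - u) (t - z),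
      lt_min (by linarith [hz.1]) (by linarith [hz.2]), ?_⟩
    intro y hy
    have hy' : y ∈ Icc u t :=
      ⟨by linarith [min_le_left (z-u) (t-z), hy.1], by linarith [min_le_right (z-u) (t-z), hy.2]⟩
    calc g z = g β := hgz
      _ ≤ g y := hβmin hy'
  have hβinner := hinner β hβuv rfl
  have hβstrict := strict_of_inner hg hβinner
  refine ⟨β, hut, hβuv, hβstrict, fun z hz => hβmin hz, ?_⟩
  intro z hz hgz
  have hz' : z ∈ Ioo u t := by
    constructor
    · rcases hz.1.lt_or_eq with h' | h'
      · exact h'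
      · exfalso; rw [h'] at hminu; rw [hgz] at hminu; exact lt_irrefl _ hminu
    · rcases hz.2.lt_or_eq with h' | h'
      · exact h'
      · exfalso; rw [h'] at hgz; rw [hgz] at hmint; exact lt_irrefl _ hmint
  exact hg.distinct z β (hinner z hz' hgz) hβinner hgz

lemma tri_total (hg : IsCRT g) (hb : IsEnum g b) {u v : ℝ}
    (hu : NotOneSidedMin g u) (hv : NotOneSidedMin g v) (hne : u ≠ v) :
    Tri g b s u v ∨ Tri g b s v u := by
  rcases lt_or_gt_of_ne hne with h' | h'
  · obtain ⟨β, hβ⟩ := exists_mrca hg hu hv h'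
    obtain ⟨i, hi⟩ := (hb.2 β).1 hβ.2.2.1
    subst hi
    cases hsi : s i
    · exact Or.inr ⟨i, Or.inr ⟨hβ, hsi⟩⟩
    · exact Or.inl ⟨i, Or.inl ⟨hβ, hsi⟩⟩
  · obtain ⟨β, hβ⟩ := exists_mrca hg hv hu h'
    obtain ⟨i, hi⟩ := (hb.2 β).1 hβ.2.2.1
    subst hi
    cases hsi : s i
    · exact Or.inl ⟨i, Or.inr ⟨hβ, hsi⟩⟩
    · exact Or.inr ⟨i, Or.inl ⟨hβ, hsi⟩⟩

lemma slm_not_mem_S {β : ℝ} (h : IsStrictLocalMin g β) : ¬ NotOneSidedMin g β := by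
  obtain ⟨hm, ε, hε, hstr⟩ := h
  intro hS
  obtain ⟨x₁, hx₁, hlt⟩ := (hS.2 ε hε).1
  have := hstr x₁ ⟨hx₁.1, by linarith [hx₁.2]⟩ (ne_of_lt hx₁.2)
  linarith

open scoped Classical ENNReal NNReal

/-- The set `{u : u ⊲ t}`. -/
def Uset (g : ℝ → ℝ) (b : ℕ → ℝ) (s : ℕ → Bool) (t : ℝ) : Set ℝ := {u | Tri g b s u t}

/-- The set `{z : t ⊲ z}`. -/
def Vset (g : ℝ → ℝ) (b : ℕ → ℝ) (s : ℕ → Bool) (t : ℝ) : Set ℝ := {z | Tri g b s t z}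

def Dset (g : ℝ → ℝ) (b : ℕ → ℝ) (s : ℕ → Bool) (i : ℕ) (t : ℝ) : Set ℝ :=
  (if s i = true ∧ IsStrictLocalMin g (b i) ∧ t ∈ Ioo (b i) (CC g (b i))
    then Ioo (AA g (b i)) (b i) else ∅) ∪
  (if s i = false ∧ IsStrictLocalMin g (b i) ∧ t ∈ Ioo (AA g (b i)) (b i)
    then Ioo (b i) (CC g (b i)) else ∅)

def DsetV (g : ℝ → ℝ) (b : ℕ → ℝ) (s : ℕ → Bool) (i : ℕ) (t : ℝ) : Set ℝ :=
  (if s i = true ∧ IsStrictLocalMin g (b i) ∧ t ∈ Ioo (AA g (b i)) (b i)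
    then Ioo (b i) (CC g (b i)) else ∅) ∪
  (if s i = false ∧ IsStrictLocalMin g (b i) ∧ t ∈ Ioo (b i) (CC g (b i))
    then Ioo (AA g (b i)) (b i) else ∅)

lemma Uset_eq (hg : IsCRT g) (t : ℝ) : Uset g b s t = ⋃ i, Dset g b s i t := by
  ext u
  simp only [Uset, mem_setOf_eq, mem_iUnion, Dset, mem_union]
  rw [tri_iff hg]
  constructor
  · rintro ⟨i, hS, ⟨hsi, hL, hR⟩ | ⟨hsi, hL, hR⟩⟩
    · exact ⟨i, Or.inl (by rw [if_pos ⟨hsi, hS, hR⟩]; exact hL)⟩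
    · exact ⟨i, Or.inr (by rw [if_pos ⟨hsi, hS, hL⟩]; exact hR)⟩
  · rintro ⟨i, hu | hu⟩
    · by_cases hc : s i = true ∧ IsStrictLocalMin g (b i) ∧ t ∈ Ioo (b i) (CC g (b i))
      · rw [if_pos hc] at hu; exact ⟨i, hc.2.1, Or.inl ⟨hc.1, hu, hc.2.2⟩⟩
      · rw [if_neg hc] at hu; exact absurd hu (notMem_empty u)
    · by_cases hc : s i = false ∧ IsStrictLocalMin g (b i) ∧ t ∈ Ioo (AA g (b i)) (b i)
      · rw [if_pos hc] at hu; exact ⟨i, hc.2.1, Or.inr ⟨hc.1, hc.2.2, hu⟩⟩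
      · rw [if_neg hc] at hu; exact absurd hu (notMem_empty u)

lemma Vset_eq (hg : IsCRT g) (t : ℝ) : Vset g b s t = ⋃ i, DsetV g b s i t := by
  ext z
  simp only [Vset, mem_setOf_eq, mem_iUnion, DsetV, mem_union]
  rw [tri_iff hg]
  constructor
  · rintro ⟨i, hS, ⟨hsi, hL, hR⟩ | ⟨hsi, hL, hR⟩⟩
    · exact ⟨i, Or.inl (by rw [if_pos ⟨hsi, hS, hL⟩]; exact hR)⟩
    · exact ⟨i, Or.inr (by rw [if_pos ⟨hsi, hS, hR⟩]; exact hL)⟩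
  · rintro ⟨i, hz | hz⟩
    · by_cases hc : s i = true ∧ IsStrictLocalMin g (b i) ∧ t ∈ Ioo (AA g (b i)) (b i)
      · rw [if_pos hc] at hz; exact ⟨i, hc.2.1, Or.inl ⟨hc.1, hc.2.2, hz⟩⟩
      · rw [if_neg hc] at hz; exact absurd hz (notMem_empty z)
    · by_cases hc : s i = false ∧ IsStrictLocalMin g (b i) ∧ t ∈ Ioo (b i) (CC g (b i))
      · rw [if_pos hc] at hz; exact ⟨i, hc.2.1, Or.inr ⟨hc.1, hz, hc.2.2⟩⟩
      · rw [if_neg hc] at hz; exact absurd hz (notMem_empty z)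

lemma Dset_meas (i : ℕ) (t : ℝ) : MeasurableSet (Dset g b s i t) := by
  unfold Dset
  apply MeasurableSet.union <;> split <;>
    first | exact measurableSet_Ioo | exact MeasurableSet.empty

lemma DsetV_meas (i : ℕ) (t : ℝ) : MeasurableSet (DsetV g b s i t) := by
  unfold DsetV
  apply MeasurableSet.union <;> split <;>
    first | exact measurableSet_Ioo | exact MeasurableSet.empty

lemma Uset_meas (hg : IsCRT g) (t : ℝ) : MeasurableSet (Uset g b s t) := by
  rw [Uset_eq hg]
  exact MeasurableSet.iUnion fun i => Dset_meas i t

lemma Vset_meas (hg : IsCRT g) (t : ℝ) : MeasurableSet (Vset g b s t) := by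
  rw [Vset_eq hg]
  exact MeasurableSet.iUnion fun i => DsetV_meas i t

lemma Dset_elim (hg : IsCRT g) {i : ℕ} {t a : ℝ} (ha : a ∈ Dset g b s i t) :
    IsStrictLocalMin g (b i) ∧ a ∈ Ioo (AA g (b i)) (CC g (b i)) ∧
      t ∈ Ioo (AA g (b i)) (CC g (b i)) ∧ ((a < b i ∧ b i < t) ∨ (t < b i ∧ b i < a)) := by
  rcases ha with ha | ha
  · by_cases hc : s i = true ∧ IsStrictLocalMin g (b i) ∧ t ∈ Ioo (b i) (CC g (b i))
    · rw [if_pos hc] at ha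
      exact ⟨hc.2.1, L_subset_exc hg hc.2.1 ha, R_subset_exc hg hc.2.1 hc.2.2,
        Or.inl ⟨ha.2, hc.2.2.1⟩⟩
    · rw [if_neg hc] at ha; exact absurd ha (notMem_empty a)
  · by_cases hc : s i = false ∧ IsStrictLocalMin g (b i) ∧ t ∈ Ioo (AA g (b i)) (b i)
    · rw [if_pos hc] at ha
      exact ⟨hc.2.1, R_subset_exc hg hc.2.1 ha, L_subset_exc hg hc.2.1 hc.2.2,
        Or.inr ⟨hc.2.2.2, ha.1⟩⟩
    · rw [if_neg hc] at ha; exact absurd ha (notMem_empty a)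

lemma sep_false (hg : IsCRT g) {β₁ β₂ : ℝ} (h1 : IsStrictLocalMin g β₁)
    (h2 : IsStrictLocalMin g β₂) (hlt : g β₁ < g β₂) {t a : ℝ}
    (ht2 : t ∈ Ioo (AA g β₂) (CC g β₂)) (ha2 : a ∈ Ioo (AA g β₂) (CC g β₂))
    (ht1 : t ∈ Ioo (AA g β₁) (CC g β₁)) (hsep : (t < β₁ ∧ β₁ < a) ∨ (a < β₁ ∧ β₁ < t)) :
    False := by
  have hnest := nest hg h1 h2 hlt ht2
  rcases hsep with ⟨htl, har⟩ | ⟨hal, htr⟩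
  · have := hnest.1 ⟨ht1.1, htl⟩ ha2
    linarith [this.2]
  · have := hnest.2 ⟨htr, ht1.2⟩ ha2
    linarith [this.1]

lemma Dset_disj (hg : IsCRT g) (hbinj : Function.Injective b) (t : ℝ) :
    Pairwise (Function.onFun Disjoint (fun i => Dset g b s i t)) := by
  intro i j hij
  rw [Function.onFun]
  rw [Set.disjoint_left]
  intro a hai haj
  obtain ⟨hSi, haXi, htXi, hsepi⟩ := Dset_elim hg hai
  obtain ⟨hSj, haXj, htXj, hsepj⟩ := Dset_elim hg haj
  have hne : b i ≠ b j := fun h => hij (hbinj h)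
  have hvalne := slm_val_ne hg hSi hSj hne
  rcases lt_or_gt_of_ne hvalne with hlt | hlt
  · refine sep_false hg hSi hSj hlt htXj haXj htXi ?_
    rcases hsepi with ⟨h1, h2⟩ | ⟨h1, h2⟩
    · exact Or.inr ⟨h1, h2⟩
    · exact Or.inl ⟨h1, h2⟩
  · refine sep_false hg hSj hSi hlt htXi haXi htXj ?_
    rcases hsepj with ⟨h1, h2⟩ | ⟨h1, h2⟩
    · exact Or.inr ⟨h1, h2⟩
    · exact Or.inl ⟨h1, h2⟩

lemma Uset_sub (hg : IsCRT g) (t : ℝ) : Uset g b s t ⊆ Icc (0:ℝ) 1 := by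
  intro u hu
  rw [Uset, mem_setOf_eq, tri_iff hg] at hu
  obtain ⟨i, hS, ⟨-, hL, -⟩ | ⟨-, -, hR⟩⟩ := hu
  · exact ⟨le_trans (AA_spec hg hS).1.1 hL.1.le, le_trans hL.2.le hS.1.2.le⟩
  · exact ⟨le_trans hS.1.1.le hR.1.le, le_trans hR.2.le (CC_spec hg hS).1.2⟩

lemma Vset_sub (hg : IsCRT g) (t : ℝ) : Vset g b s t ⊆ Icc (0:ℝ) 1 := by
  intro z hz
  rw [Vset, mem_setOf_eq, tri_iff hg] at hz
  obtain ⟨i, hS, ⟨-, -, hR⟩ | ⟨-, hL, -⟩⟩ := hz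
  · exact ⟨le_trans hS.1.1.le hR.1.le, le_trans hR.2.le (CC_spec hg hS).1.2⟩
  · exact ⟨le_trans (AA_spec hg hS).1.1 hL.1.le, le_trans hL.2.le hS.1.2.le⟩

lemma F_eq (hg : IsCRT g) (hbinj : Function.Injective b) (t : ℝ) :
    volume (Uset g b s t) = ∑' i, volume (Dset g b s i t) := by
  rw [Uset_eq hg]
  exact measure_iUnion (Dset_disj hg hbinj t) (fun i => Dset_meas i t)

lemma F_meas (hg : IsCRT g) (hbinj : Function.Injective b) :
    Measurable (fun t => volume (Uset g b s t)) := by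
  have heq : (fun t => volume (Uset g b s t)) =
      fun t => ∑' i, volume (Dset g b s i t) := funext (F_eq hg hbinj)
  rw [heq]
  apply Measurable.ennreal_tsum
  intro i
  have hrw : (fun t => volume (Dset g b s i t)) = fun t =>
      (if s i = true ∧ IsStrictLocalMin g (b i) ∧ t ∈ Ioo (b i) (CC g (b i))
        then volume (Ioo (AA g (b i)) (b i)) else 0) +
      (if s i = false ∧ IsStrictLocalMin g (b i) ∧ t ∈ Ioo (AA g (b i)) (b i)
        then volume (Ioo (b i) (CC g (b i))) else 0) := by
    funext t
    unfold Dset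
    split_ifs with h1 h2 h3
    · exact absurd (h1.1.symm.trans h2.1) Bool.noConfusion
    · simp
    · simp
    · simp
  rw [hrw]
  apply Measurable.add
  · by_cases h1 : s i = true ∧ IsStrictLocalMin g (b i)
    · have : (fun t => if s i = true ∧ IsStrictLocalMin g (b i) ∧ t ∈ Ioo (b i) (CC g (b i))
          then volume (Ioo (AA g (b i)) (b i)) else 0) =
          fun t => if t ∈ Ioo (b i) (CC g (b i))
          then volume (Ioo (AA g (b i)) (b i)) else 0 := by
        funext t; by_cases ht : t ∈ Ioo (b i) (CC g (b i))
        · rw [if_pos ⟨h1.1, h1.2, ht⟩, if_pos ht]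
        · rw [if_neg (fun hc => ht hc.2.2), if_neg ht]
      rw [this]
      exact Measurable.ite measurableSet_Ioo measurable_const measurable_const
    · have : (fun t => if s i = true ∧ IsStrictLocalMin g (b i) ∧ t ∈ Ioo (b i) (CC g (b i))
          then volume (Ioo (AA g (b i)) (b i)) else 0) = fun _ => (0:ℝ≥0∞) := by
        funext t; rw [if_neg (fun hc => h1 ⟨hc.1, hc.2.1⟩)]
      rw [this]; exact measurable_const
  · by_cases h1 : s i = false ∧ IsStrictLocalMin g (b i)
    · have : (fun t => if s i = false ∧ IsStrictLocalMin g (b i) ∧ t ∈ Ioo (AA g (b i)) (b i)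
          then volume (Ioo (b i) (CC g (b i))) else 0) =
          fun t => if t ∈ Ioo (AA g (b i)) (b i)
          then volume (Ioo (b i) (CC g (b i))) else 0 := by
        funext t; by_cases ht : t ∈ Ioo (AA g (b i)) (b i)
        · rw [if_pos ⟨h1.1, h1.2, ht⟩, if_pos ht]
        · rw [if_neg (fun hc => ht hc.2.2), if_neg ht]
      rw [this]
      exact Measurable.ite measurableSet_Ioo measurable_const measurable_const
    · have : (fun t => if s i = false ∧ IsStrictLocalMin g (b i) ∧ t ∈ Ioo (AA g (b i)) (b i)
          then volume (Ioo (b i) (CC g (b i))) else 0) = fun _ => (0:ℝ≥0∞) := by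
        funext t; rw [if_neg (fun hc => h1 ⟨hc.1, hc.2.1⟩)]
      rw [this]; exact measurable_const

lemma F_le_one (hg : IsCRT g) (t : ℝ) : volume (Uset g b s t) ≤ 1 := by
  calc volume (Uset g b s t) ≤ volume (Icc (0:ℝ) 1) := measure_mono (Uset_sub hg t)
    _ = 1 := by rw [Real.volume_Icc]; norm_num

lemma phi_eq' (hg : IsCRT g) (t : ℝ) : phi g b s t = (volume (Uset g b s t)).toReal := by
  have hset : {u ∈ Icc (0:ℝ) 1 | Tri g b s u t} = Uset g b s t := by
    ext u
    simp only [mem_sep_iff, Uset, mem_setOf_eq]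
    exact ⟨fun h => h.2, fun h => ⟨Uset_sub hg t h, h⟩⟩
  unfold phi
  rw [hset]

/-! ### The leaf set -/

lemma Sset_meas (hg : IsCRT g) : MeasurableSet {x | NotOneSidedMin g x} := by
  have hL : ∀ n : ℕ, MeasurableSet (⋃ (q : ℚ),
      if (q:ℝ) ∈ Ioo (0:ℝ) 1 then
        ((Ioo (0:ℝ) 1 ∩ g ⁻¹' (Ioi (g q))) ∩ Ioo (q:ℝ) ((q:ℝ) + 1/(n+1))) else ∅) := by
    intro n
    refine MeasurableSet.iUnion fun q => ?_
    split
    · exact (((hg.cont.mono Ioo_subset_Icc_self).isOpen_inter_preimage isOpen_Ioo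
        isOpen_Ioi).measurableSet).inter measurableSet_Ioo
    · exact MeasurableSet.empty
  have hR : ∀ n : ℕ, MeasurableSet (⋃ (q : ℚ),
      if (q:ℝ) ∈ Ioo (0:ℝ) 1 then
        ((Ioo (0:ℝ) 1 ∩ g ⁻¹' (Ioi (g q))) ∩ Ioo ((q:ℝ) - 1/(n+1)) (q:ℝ)) else ∅) := by
    intro n
    refine MeasurableSet.iUnion fun q => ?_
    split
    · exact (((hg.cont.mono Ioo_subset_Icc_self).isOpen_inter_preimage isOpen_Ioo
        isOpen_Ioi).measurableSet).inter measurableSet_Ioo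
    · exact MeasurableSet.empty
  have hdesc : {x | NotOneSidedMin g x} = Ioo (0:ℝ) 1 ∩ ⋂ (n : ℕ),
      ((⋃ (q : ℚ), if (q:ℝ) ∈ Ioo (0:ℝ) 1 then
        ((Ioo (0:ℝ) 1 ∩ g ⁻¹' (Ioi (g q))) ∩ Ioo (q:ℝ) ((q:ℝ) + 1/(n+1))) else ∅) ∩
       (⋃ (q : ℚ), if (q:ℝ) ∈ Ioo (0:ℝ) 1 then
        ((Ioo (0:ℝ) 1 ∩ g ⁻¹' (Ioi (g q))) ∩ Ioo ((q:ℝ) - 1/(n+1)) (q:ℝ)) else ∅)) := by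
    ext x
    simp only [mem_setOf_eq, mem_inter_iff, mem_iInter]
    constructor
    · rintro ⟨hx01, hxprop⟩
      refine ⟨hx01, fun n => ?_⟩
      have hn : (0:ℝ) < 1/(n+1) := by positivity
      constructor
      · -- left witness
        set ε := min (1/(n+1) : ℝ) x with hε
        have hεpos : 0 < ε := lt_min hn hx01.1
        obtain ⟨x₁, hx₁mem, hx₁lt⟩ := (hxprop ε hεpos).1
        have hx₁pos : 0 < x₁ := by
          have h1 : x - ε ≥ 0 := by
            have := min_le_right (1/(n+1) : ℝ) x; simp only [hε]; linarith
          linarith [hx₁mem.1]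
        have hx₁lt1 : x₁ < 1 := lt_trans hx₁mem.2 hx01.2
        have hcont : ContinuousAt g x₁ :=
          hg.cont.continuousAt (Icc_mem_nhds (by linarith) (by linarith))
        have hnhds : g ⁻¹' (Iio (g x)) ∈ nhds x₁ :=
          hcont.preimage_mem_nhds (Iio_mem_nhds hx₁lt)
        obtain ⟨δ, hδpos, hδsub⟩ := Metric.mem_nhds_iff.1 hnhds
        obtain ⟨q, hq1, hq2⟩ := exists_rat_btwn
          (show max (x₁ - δ) (max (x - ε) 0) < x₁ by
            rw [max_lt_iff, max_lt_iff]
            exact ⟨by linarith, hx₁mem.1, hx₁pos⟩)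
        rw [max_lt_iff, max_lt_iff] at hq1
        obtain ⟨hqδ, hqε, hq0⟩ := hq1
        have hqx : (q:ℝ) < x := lt_trans hq2 hx₁mem.2
        have hgq : g q < g x := by
          have : (q:ℝ) ∈ Metric.ball x₁ δ := by
            rw [Metric.mem_ball, Real.dist_eq, abs_lt]
            constructor <;> linarith
          exact hδsub this
        refine mem_iUnion.2 ⟨q, ?_⟩
        rw [if_pos ⟨hq0, lt_trans hq2 hx₁lt1⟩]
        refine ⟨⟨hx01, hgq⟩, hqx, ?_⟩
        have := min_le_left (1/(n+1) : ℝ) x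
        simp only [hε] at hqε
        linarith
      · -- right witness
        set ε := min (1/(n+1) : ℝ) (1 - x) with hε
        have hεpos : 0 < ε := lt_min hn (by linarith [hx01.2])
        obtain ⟨x₂, hx₂mem, hx₂lt⟩ := (hxprop ε hεpos).2
        have hx₂pos : 0 < x₂ := lt_trans hx01.1 hx₂mem.1
        have hx₂lt1 : x₂ < 1 := by
          have h1 : x + ε ≤ 1 := by
            have := min_le_right (1/(n+1) : ℝ) (1 - x); simp only [hε]; linarith
          linarith [hx₂mem.2]
        have hcont : ContinuousAt g x₂ :=
          hg.cont.continuousAt (Icc_mem_nhds (by linarith) (by linarith))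
        have hnhds : g ⁻¹' (Iio (g x)) ∈ nhds x₂ :=
          hcont.preimage_mem_nhds (Iio_mem_nhds hx₂lt)
        obtain ⟨δ, hδpos, hδsub⟩ := Metric.mem_nhds_iff.1 hnhds
        obtain ⟨q, hq1, hq2⟩ := exists_rat_btwn
          (show x₂ < min (x₂ + δ) (min (x + ε) 1) by
            rw [lt_min_iff, lt_min_iff]
            exact ⟨by linarith, hx₂mem.2, hx₂lt1⟩)
        rw [lt_min_iff, lt_min_iff] at hq2
        obtain ⟨hqδ, hqε, hq1'⟩ := hq2
        have hqx : x < (q:ℝ) := lt_trans hx₂mem.1 hq1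
        have hgq : g q < g x := by
          have : (q:ℝ) ∈ Metric.ball x₂ δ := by
            rw [Metric.mem_ball, Real.dist_eq, abs_lt]
            constructor <;> linarith
          exact hδsub this
        refine mem_iUnion.2 ⟨q, ?_⟩
        rw [if_pos ⟨lt_trans hx₂pos hq1, hq1'⟩]
        refine ⟨⟨hx01, hgq⟩, ?_, hqx⟩
        have := min_le_left (1/(n+1) : ℝ) (1 - x)
        simp only [hε] at hqε
        linarith
    · rintro ⟨hx01, hall⟩
      refine ⟨hx01, fun ε hε => ?_⟩
      obtain ⟨n, hn⟩ := exists_nat_one_div_lt hε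
      obtain ⟨hLn, hRn⟩ := hall n
      constructor
      · obtain ⟨q, hq⟩ := mem_iUnion.1 hLn
        by_cases hc : (q:ℝ) ∈ Ioo (0:ℝ) 1
        · rw [if_pos hc] at hq
          obtain ⟨⟨-, hgq⟩, hq1, hq2⟩ := hq
          exact ⟨q, ⟨by linarith, hq1⟩, hgq⟩
        · rw [if_neg hc] at hq; exact absurd hq (notMem_empty x)
      · obtain ⟨q, hq⟩ := mem_iUnion.1 hRn
        by_cases hc : (q:ℝ) ∈ Ioo (0:ℝ) 1
        · rw [if_pos hc] at hq
          obtain ⟨⟨-, hgq⟩, hq1, hq2⟩ := hq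
          exact ⟨q, ⟨hq2, by linarith⟩, hgq⟩
        · rw [if_neg hc] at hq; exact absurd hq (notMem_empty x)
  rw [hdesc]
  exact measurableSet_Ioo.inter (MeasurableSet.iInter fun n => (hL n).inter (hR n))

lemma Sset_sub : {x | NotOneSidedMin g x} ⊆ Icc (0:ℝ) 1 :=
  fun x hx => ⟨hx.1.1.le, hx.1.2.le⟩

lemma compl_S_null (hg : IsCRT g) : volume (Icc (0:ℝ) 1 \ {x | NotOneSidedMin g x}) = 0 := by
  have h1 : volume (Icc (0:ℝ) 1) = 1 := by rw [Real.volume_Icc]; norm_num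
  rw [measure_diff Sset_sub (Sset_meas hg).nullMeasurableSet
    (by rw [hg.leaves_full]; exact ENNReal.one_ne_top), h1, hg.leaves_full, tsub_self]

lemma inter_S (hg : IsCRT g) {X : Set ℝ} (hX : MeasurableSet X) (hsub : X ⊆ Icc (0:ℝ) 1) :
    volume (X ∩ {x | NotOneSidedMin g x}) = volume X := by
  refine le_antisymm (measure_mono inter_subset_left) ?_
  calc volume X = volume ((X ∩ {x | NotOneSidedMin g x}) ∪ (X \ {x | NotOneSidedMin g x})) := by
        rw [inter_union_diff]
    _ ≤ volume (X ∩ {x | NotOneSidedMin g x}) + volume (X \ {x | NotOneSidedMin g x}) :=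
        measure_union_le _ _
    _ ≤ volume (X ∩ {x | NotOneSidedMin g x}) + 0 := by
        refine add_le_add le_rfl ?_
        refine le_trans (measure_mono fun z hz => ?_) (le_of_eq (compl_S_null hg))
        exact ⟨hsub hz.1, hz.2⟩
    _ = volume (X ∩ {x | NotOneSidedMin g x}) := add_zero _

/-! ### Monotonicity and partition -/

lemma Uset_mono (hg : IsCRT g) (hbinj : Function.Injective b) {p q : ℝ}
    (h : Tri g b s p q) : Uset g b s p ⊆ Uset g b s q :=
  fun _ hz => tri_trans hg hbinj hz h

lemma Vset_mono (hg : IsCRT g) (hbinj : Function.Injective b) {p q : ℝ}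
    (h : Tri g b s p q) : Vset g b s q ⊆ Vset g b s p :=
  fun _ hz => tri_trans hg hbinj h hz

lemma UV_partition (hg : IsCRT g) (hb : IsEnum g b) {t : ℝ} (ht : NotOneSidedMin g t) :
    volume (Uset g b s t) + volume (Vset g b s t) = 1 := by
  have hdisj : Disjoint (Uset g b s t) (Vset g b s t) :=
    Set.disjoint_left.2 fun z hz hz' => absurd (tri_antisymm hb.1 hz hz') id
  rw [← measure_union hdisj (Vset_meas hg t)]
  refine le_antisymm ?_ ?_
  · calc volume (Uset g b s t ∪ Vset g b s t) ≤ volume (Icc (0:ℝ) 1) :=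
        measure_mono (union_subset (Uset_sub hg t) (Vset_sub hg t))
      _ = 1 := by rw [Real.volume_Icc]; norm_num
  · have hsub : {x | NotOneSidedMin g x} \ {t} ⊆ Uset g b s t ∪ Vset g b s t := by
      rintro z ⟨hzS, hzt⟩
      rcases tri_total hg hb hzS ht (fun h => hzt (h ▸ rfl)) with h' | h'
      · exact Or.inl h'
      · exact Or.inr h'
    calc (1:ℝ≥0∞) = volume {x | NotOneSidedMin g x} := hg.leaves_full.symm
      _ = volume ({x | NotOneSidedMin g x} \ {t}) :=
          (measure_diff_null (Real.volume_singleton)).symm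
      _ ≤ volume (Uset g b s t ∪ Vset g b s t) := measure_mono hsub

/-! ### Three point lemma -/

lemma tri_lt_elim (hg : IsCRT g) {p q : ℝ} (h : Tri g b s p q) (hpq : p < q) :
    ∃ k, IsStrictLocalMin g (b k) ∧ s k = true ∧
      p ∈ Ioo (AA g (b k)) (b k) ∧ q ∈ Ioo (b k) (CC g (b k)) := by
  rw [tri_iff hg] at h
  obtain ⟨k, hS, ⟨hs, hL, hR⟩ | ⟨hs, hL, hR⟩⟩ := h
  · exact ⟨k, hS, hs, hL, hR⟩
  · exfalso; linarith [hL.2, hR.1]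

lemma tri_gt_elim (hg : IsCRT g) {p q : ℝ} (h : Tri g b s p q) (hqp : q < p) :
    ∃ k, IsStrictLocalMin g (b k) ∧ s k = false ∧
      q ∈ Ioo (AA g (b k)) (b k) ∧ p ∈ Ioo (b k) (CC g (b k)) := by
  rw [tri_iff hg] at h
  obtain ⟨k, hS, ⟨hs, hL, hR⟩ | ⟨hs, hL, hR⟩⟩ := h
  · exfalso; linarith [hL.2, hR.1]
  · exact ⟨k, hS, hs, hL, hR⟩

lemma Ioo_vol_pos_contra {B : Set ℝ} {a c : ℝ} (h : a < c) (hsub : Ioo a c ⊆ B)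
    (h0 : volume B = 0) : False := by
  have hle : volume (Ioo a c) = 0 := le_antisymm (h0 ▸ measure_mono hsub) zero_le
  rw [Real.volume_Ioo, ENNReal.ofReal_eq_zero] at hle
  linarith

lemma three_point (hg : IsCRT g) (hb : IsEnum g b) {Q : Set ℝ}
    (hQS : ∀ p ∈ Q, NotOneSidedMin g p)
    (hnull : ∀ p ∈ Q, ∀ q ∈ Q, Tri g b s p q →
      volume {z | Tri g b s p z ∧ Tri g b s z q} = 0) :
    ∀ x ∈ Q, ∀ w ∈ Q, ∀ y ∈ Q, x < w → w < y → False := by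
  intro x hxQ w hwQ y hyQ hxw hwy
  have hxy : x < y := lt_trans hxw hwy
  rcases tri_total hg hb (hQS x hxQ) (hQS y hyQ) (ne_of_lt hxy) with hxy' | hyx'
  · obtain ⟨k, hSk, hsk, hxL, hyR⟩ := tri_lt_elim hg hxy' hxy
    have hwX : w ∈ Ioo (AA g (b k)) (CC g (b k)) := ⟨lt_trans hxL.1 hxw, lt_trans hwy hyR.2⟩
    have hwne : w ≠ b k := by
      intro heq
      exact slm_not_mem_S (heq ▸ hSk) (heq ▸ hQS w hwQ)
    rcases lt_or_gt_of_ne hwne with hwl | hwr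
    · have hwLk : w ∈ Ioo (AA g (b k)) (b k) := ⟨hwX.1, hwl⟩
      have hTwy : Tri g b s w y := (tri_iff hg).2 ⟨k, hSk, Or.inl ⟨hsk, hwLk, hyR⟩⟩
      rcases tri_total hg hb (hQS x hxQ) (hQS w hwQ) (ne_of_lt hxw) with hxw' | hwx'
      · obtain ⟨m, hSm, hsm, hxLm, hwRm⟩ := tri_lt_elim hg hxw' hxw
        have hgt : g (b k) < g (b m) :=
          (AA_spec hg hSk).2.2.2 (b m) ⟨lt_trans hxL.1 hxLm.2, lt_trans hwRm.1 hwl⟩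
        have hnest := (nest hg hSk hSm hgt (L_subset_exc hg hSm hxLm)).1 hxL
        refine Ioo_vol_pos_contra (CC_spec hg hSm).2.1 ?_ (hnull x hxQ y hyQ hxy')
        intro z hz
        exact ⟨(tri_iff hg).2 ⟨m, hSm, Or.inl ⟨hsm, hxLm, hz⟩⟩,
               (tri_iff hg).2 ⟨k, hSk, Or.inl ⟨hsk, hnest (R_subset_exc hg hSm hz), hyR⟩⟩⟩
      · obtain ⟨m, hSm, hsm, hxLm, hwRm⟩ := tri_gt_elim hg hwx' hxw
        have hgt : g (b k) < g (b m) :=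
          (AA_spec hg hSk).2.2.2 (b m) ⟨lt_trans hxL.1 hxLm.2, lt_trans hwRm.1 hwl⟩
        have hnest := (nest hg hSk hSm hgt (L_subset_exc hg hSm hxLm)).1 hxL
        refine Ioo_vol_pos_contra (AA_spec hg hSm).2.1 ?_ (hnull w hwQ y hyQ hTwy)
        intro z hz
        exact ⟨(tri_iff hg).2 ⟨m, hSm, Or.inr ⟨hsm, hz, hwRm⟩⟩,
               (tri_iff hg).2 ⟨k, hSk, Or.inl ⟨hsk, hnest (L_subset_exc hg hSm hz), hyR⟩⟩⟩
    · have hwRk : w ∈ Ioo (b k) (CC g (b k)) := ⟨hwr, hwX.2⟩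
      have hTxw : Tri g b s x w := (tri_iff hg).2 ⟨k, hSk, Or.inl ⟨hsk, hxL, hwRk⟩⟩
      rcases tri_total hg hb (hQS w hwQ) (hQS y hyQ) (ne_of_lt hwy) with hwy' | hyw'
      · obtain ⟨m, hSm, hsm, hwLm, hyRm⟩ := tri_lt_elim hg hwy' hwy
        have hgt : g (b k) < g (b m) :=
          (CC_spec hg hSk).2.2.2 (b m) ⟨lt_trans hwr hwLm.2, lt_trans hyRm.1 hyR.2⟩
        have hnest := (nest hg hSk hSm hgt (L_subset_exc hg hSm hwLm)).2 hwRk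
        refine Ioo_vol_pos_contra (AA_spec hg hSm).2.1 ?_ (hnull x hxQ y hyQ hxy')
        intro z hz
        exact ⟨(tri_iff hg).2 ⟨k, hSk, Or.inl ⟨hsk, hxL, hnest (L_subset_exc hg hSm hz)⟩⟩,
               (tri_iff hg).2 ⟨m, hSm, Or.inl ⟨hsm, hz, hyRm⟩⟩⟩
      · obtain ⟨m, hSm, hsm, hwLm, hyRm⟩ := tri_gt_elim hg hyw' hwy
        have hgt : g (b k) < g (b m) :=
          (CC_spec hg hSk).2.2.2 (b m) ⟨lt_trans hwr hwLm.2, lt_trans hyRm.1 hyR.2⟩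
        have hnest := (nest hg hSk hSm hgt (L_subset_exc hg hSm hwLm)).2 hwRk
        refine Ioo_vol_pos_contra (CC_spec hg hSm).2.1 ?_ (hnull x hxQ w hwQ hTxw)
        intro z hz
        exact ⟨(tri_iff hg).2 ⟨k, hSk, Or.inl ⟨hsk, hxL, hnest (R_subset_exc hg hSm hz)⟩⟩,
               (tri_iff hg).2 ⟨m, hSm, Or.inr ⟨hsm, hwLm, hz⟩⟩⟩
  · obtain ⟨k, hSk, hsk, hxL, hyR⟩ := tri_gt_elim hg hyx' hxy
    have hwX : w ∈ Ioo (AA g (b k)) (CC g (b k)) := ⟨lt_trans hxL.1 hxw, lt_trans hwy hyR.2⟩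
    have hwne : w ≠ b k := by
      intro heq
      exact slm_not_mem_S (heq ▸ hSk) (heq ▸ hQS w hwQ)
    rcases lt_or_gt_of_ne hwne with hwl | hwr
    · have hwLk : w ∈ Ioo (AA g (b k)) (b k) := ⟨hwX.1, hwl⟩
      have hTyw : Tri g b s y w := (tri_iff hg).2 ⟨k, hSk, Or.inr ⟨hsk, hwLk, hyR⟩⟩
      rcases tri_total hg hb (hQS x hxQ) (hQS w hwQ) (ne_of_lt hxw) with hxw' | hwx'
      · obtain ⟨m, hSm, hsm, hxLm, hwRm⟩ := tri_lt_elim hg hxw' hxw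
        have hgt : g (b k) < g (b m) :=
          (AA_spec hg hSk).2.2.2 (b m) ⟨lt_trans hxL.1 hxLm.2, lt_trans hwRm.1 hwl⟩
        have hnest := (nest hg hSk hSm hgt (L_subset_exc hg hSm hxLm)).1 hxL
        refine Ioo_vol_pos_contra (AA_spec hg hSm).2.1 ?_ (hnull y hyQ w hwQ hTyw)
        intro z hz
        exact ⟨(tri_iff hg).2 ⟨k, hSk, Or.inr ⟨hsk, hnest (L_subset_exc hg hSm hz), hyR⟩⟩,
               (tri_iff hg).2 ⟨m, hSm, Or.inl ⟨hsm, hz, hwRm⟩⟩⟩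
      · obtain ⟨m, hSm, hsm, hxLm, hwRm⟩ := tri_gt_elim hg hwx' hxw
        have hgt : g (b k) < g (b m) :=
          (AA_spec hg hSk).2.2.2 (b m) ⟨lt_trans hxL.1 hxLm.2, lt_trans hwRm.1 hwl⟩
        have hnest := (nest hg hSk hSm hgt (L_subset_exc hg hSm hxLm)).1 hxL
        refine Ioo_vol_pos_contra (CC_spec hg hSm).2.1 ?_ (hnull y hyQ x hxQ hyx')
        intro z hz
        exact ⟨(tri_iff hg).2 ⟨k, hSk, Or.inr ⟨hsk, hnest (R_subset_exc hg hSm hz), hyR⟩⟩,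
               (tri_iff hg).2 ⟨m, hSm, Or.inr ⟨hsm, hxLm, hz⟩⟩⟩
    · have hwRk : w ∈ Ioo (b k) (CC g (b k)) := ⟨hwr, hwX.2⟩
      have hTwx : Tri g b s w x := (tri_iff hg).2 ⟨k, hSk, Or.inr ⟨hsk, hxL, hwRk⟩⟩
      rcases tri_total hg hb (hQS w hwQ) (hQS y hyQ) (ne_of_lt hwy) with hwy' | hyw'
      · obtain ⟨m, hSm, hsm, hwLm, hyRm⟩ := tri_lt_elim hg hwy' hwy
        have hgt : g (b k) < g (b m) :=
          (CC_spec hg hSk).2.2.2 (b m) ⟨lt_trans hwr hwLm.2, lt_trans hyRm.1 hyR.2⟩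
        have hnest := (nest hg hSk hSm hgt (L_subset_exc hg hSm hwLm)).2 hwRk
        refine Ioo_vol_pos_contra (CC_spec hg hSm).2.1 ?_ (hnull w hwQ x hxQ hTwx)
        intro z hz
        exact ⟨(tri_iff hg).2 ⟨m, hSm, Or.inl ⟨hsm, hwLm, hz⟩⟩,
               (tri_iff hg).2 ⟨k, hSk, Or.inr ⟨hsk, hxL, hnest (R_subset_exc hg hSm hz)⟩⟩⟩
      · obtain ⟨m, hSm, hsm, hwLm, hyRm⟩ := tri_gt_elim hg hyw' hwy
        have hgt : g (b k) < g (b m) :=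
          (CC_spec hg hSk).2.2.2 (b m) ⟨lt_trans hwr hwLm.2, lt_trans hyRm.1 hyR.2⟩
        have hnest := (nest hg hSk hSm hgt (L_subset_exc hg hSm hwLm)).2 hwRk
        refine Ioo_vol_pos_contra (AA_spec hg hSm).2.1 ?_ (hnull y hyQ x hxQ hyx')
        intro z hz
        exact ⟨(tri_iff hg).2 ⟨m, hSm, Or.inr ⟨hsm, hz, hyRm⟩⟩,
               (tri_iff hg).2 ⟨k, hSk, Or.inr ⟨hsk, hxL, hnest (L_subset_exc hg hSm hz)⟩⟩⟩

lemma no_three_null {P : Set ℝ}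
    (h : ∀ x ∈ P, ∀ w ∈ P, ∀ y ∈ P, x < w → w < y → False) : volume P = 0 := by
  by_cases h2 : ∃ a ∈ P, ∃ c ∈ P, a ≠ c
  · obtain ⟨a, ha, c, hc, hac⟩ := h2
    have hsub : P ⊆ {a, c} := by
      intro z hz
      by_contra hz'
      rw [mem_insert_iff, mem_singleton_iff] at hz'
      push_neg at hz'
      obtain ⟨hza, hzc⟩ := hz'
      rcases lt_trichotomy a c with h1 | h1 | h1
      · rcases lt_trichotomy z a with h3 | h3 | h3
        · exact h z hz a ha c hc h3 h1
        · exact hza h3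
        · rcases lt_trichotomy z c with h4 | h4 | h4
          · exact h a ha z hz c hc h3 h4
          · exact hzc h4
          · exact h a ha c hc z hz h1 h4
      · exact hac h1
      · rcases lt_trichotomy z c with h3 | h3 | h3
        · exact h z hz c hc a ha h3 h1
        · exact hzc h3
        · rcases lt_trichotomy z a with h4 | h4 | h4
          · exact h c hc z hz a ha h3 h4
          · exact hza h4
          · exact h c hc a ha z hz h1 h4
    exact measure_mono_null hsub (Set.Countable.measure_zero
      ((countable_singleton c).insert a) volume)
  · push_neg at h2
    have hsub : P.Subsingleton := fun a ha c hc => h2 a ha c hc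
    exact hsub.measure_zero volume

/-! ### Chain bounds -/

lemma chain_bound (hg : IsCRT g) (hb : IsEnum g b) {T : Set ℝ}
    (hTS : ∀ t ∈ T, NotOneSidedMin g t) {c : ℝ≥0∞}
    (hc : ∀ t ∈ T, volume (Uset g b s t) ≤ c) : volume T ≤ c := by
  rcases T.eq_empty_or_nonempty with rfl | ⟨t₀, ht₀⟩
  · simp
  set σ : ℝ≥0∞ := ⨆ t ∈ T, volume (Uset g b s t) with hσdef
  have hσc : σ ≤ c := iSup₂_le hc
  have hσ1 : σ ≤ 1 := iSup₂_le fun t _ => F_le_one hg t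
  have hσtop : σ ≠ ⊤ := (lt_of_le_of_lt hσ1 ENNReal.one_lt_top).ne
  have hseq : ∀ n : ℕ, ∃ t, t ∈ T ∧ σ - ((n:ℝ≥0∞)+1)⁻¹ ≤ volume (Uset g b s t) := by
    intro n
    by_cases hσ0 : σ = 0
    · exact ⟨t₀, ht₀, by rw [hσ0]; simp⟩
    · have hlt : σ - ((n:ℝ≥0∞)+1)⁻¹ < σ :=
        ENNReal.sub_lt_self hσtop hσ0 (by simp)
      rw [hσdef] at hlt
      rw [lt_iSup_iff] at hlt
      obtain ⟨t, hlt2⟩ := hlt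
      rw [lt_iSup_iff] at hlt2
      obtain ⟨htT, hlt3⟩ := hlt2
      exact ⟨t, htT, hlt3.le⟩
  choose tn htnT htnge using hseq
  set E : Set ℝ := ⋃ n, Uset g b s (tn n) with hE
  have hdir : Directed (· ⊆ ·) (fun n => Uset g b s (tn n)) := by
    intro m n
    rcases eq_or_ne (tn m) (tn n) with heq | hne
    · exact ⟨n, by simp only []; rw [heq], subset_rfl⟩
    · rcases tri_total hg hb (hTS _ (htnT m)) (hTS _ (htnT n)) hne with h' | h'
      · exact ⟨n, Uset_mono hg hb.1 h', subset_rfl⟩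
      · exact ⟨m, subset_rfl, Uset_mono hg hb.1 h'⟩
  have hEvol : volume E = ⨆ n, volume (Uset g b s (tn n)) := hdir.measure_iUnion
  have hEleσ : volume E ≤ σ := by
    rw [hEvol]
    exact iSup_le fun n =>
      le_iSup₂ (f := fun t (_ : t ∈ T) => volume (Uset g b s t)) (tn n) (htnT n)
  have hσleE : σ ≤ volume E := by
    refine ENNReal.le_of_forall_pos_le_add fun ε hε _ => ?_
    obtain ⟨n, hn⟩ := ENNReal.exists_inv_nat_lt
      (show ((ε:ℝ≥0∞)) ≠ 0 by exact_mod_cast hε.ne')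
    calc σ ≤ volume (Uset g b s (tn n)) + ((n:ℝ≥0∞)+1)⁻¹ := by
          rw [← tsub_le_iff_right]; exact htnge n
      _ ≤ volume E + ε := by
          refine add_le_add (measure_mono (subset_iUnion (fun k => Uset g b s (tn k)) n)) ?_
          refine le_trans ?_ hn.le
          exact ENNReal.inv_le_inv.2 le_self_add
  have hEσ : volume E = σ := le_antisymm hEleσ hσleE
  set P : Set ℝ := T \ E with hP
  have hPsub : ∀ p ∈ P, E ⊆ Uset g b s p := by
    intro p hp
    refine iUnion_subset fun n => ?_
    rcases eq_or_ne (tn n) p with heq | hne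
    · rw [heq]
    · rcases tri_total hg hb (hTS _ (htnT n)) (hTS _ hp.1) hne with h' | h'
      · exact Uset_mono hg hb.1 h'
      · exact absurd (mem_iUnion.2 ⟨n, h'⟩ : p ∈ E) hp.2
  have hPvol : ∀ p ∈ P, volume (Uset g b s p) = σ := by
    intro p hp
    refine le_antisymm ?_ ?_
    · exact le_iSup₂ (f := fun t (_ : t ∈ T) => volume (Uset g b s t)) p hp.1
    · rw [← hEσ]; exact measure_mono (hPsub p hp)
  have hPnull3 : ∀ p ∈ P, ∀ q ∈ P, Tri g b s p q →
      volume {z | Tri g b s p z ∧ Tri g b s z q} = 0 := by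
    intro p hp q hq hpq
    have hsub' : Uset g b s p ∪ {p} ⊆ Uset g b s q :=
      union_subset (Uset_mono hg hb.1 hpq) (singleton_subset_iff.2 hpq)
    have hBsub : {z | Tri g b s p z ∧ Tri g b s z q} ⊆
        Uset g b s q \ (Uset g b s p ∪ {p}) := by
      rintro z ⟨h1, h2⟩
      refine ⟨h2, ?_⟩
      rintro (h3 | h3)
      · exact tri_antisymm hb.1 h1 h3
      · rw [mem_singleton_iff] at h3; subst h3; exact tri_irrefl h1
    refine le_antisymm (le_trans (measure_mono hBsub) ?_) zero_le
    rw [measure_diff hsub'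
      (((Uset_meas hg p).union (measurableSet_singleton p)).nullMeasurableSet)
      ((lt_of_le_of_lt (le_trans (measure_mono hsub') (F_le_one hg q))
        ENNReal.one_lt_top).ne)]
    rw [hPvol q hq]
    have h1 : σ ≤ volume (Uset g b s p ∪ {p}) := by
      rw [← hPvol p hp]; exact measure_mono subset_union_left
    exact le_trans (tsub_le_tsub le_rfl h1) (by simp)
  have hPnull := no_three_null (three_point hg hb (fun p hp => hTS p hp.1) hPnull3)
  calc volume T ≤ volume (E ∪ P) :=
        measure_mono (fun t ht => (em (t ∈ E)).elim Or.inl (fun h => Or.inr ⟨ht, h⟩))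
    _ ≤ volume E + volume P := measure_union_le _ _
    _ = σ + 0 := by rw [hEσ, hPnull]
    _ = σ := add_zero σ
    _ ≤ c := hσc

lemma chain_bound_V (hg : IsCRT g) (hb : IsEnum g b) {T : Set ℝ}
    (hTS : ∀ t ∈ T, NotOneSidedMin g t) {c : ℝ≥0∞}
    (hc : ∀ t ∈ T, volume (Vset g b s t) ≤ c) : volume T ≤ c := by
  rcases T.eq_empty_or_nonempty with rfl | ⟨t₀, ht₀⟩
  · simp
  set σ : ℝ≥0∞ := ⨆ t ∈ T, volume (Vset g b s t) with hσdef
  have hσc : σ ≤ c := iSup₂_le hc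
  have hσ1 : σ ≤ 1 := iSup₂_le fun t _ => le_trans
    (measure_mono (Vset_sub hg t)) (le_of_eq (by rw [Real.volume_Icc]; norm_num))
  have hσtop : σ ≠ ⊤ := (lt_of_le_of_lt hσ1 ENNReal.one_lt_top).ne
  have hseq : ∀ n : ℕ, ∃ t, t ∈ T ∧ σ - ((n:ℝ≥0∞)+1)⁻¹ ≤ volume (Vset g b s t) := by
    intro n
    by_cases hσ0 : σ = 0
    · exact ⟨t₀, ht₀, by rw [hσ0]; simp⟩
    · have hlt : σ - ((n:ℝ≥0∞)+1)⁻¹ < σ :=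
        ENNReal.sub_lt_self hσtop hσ0 (by simp)
      rw [hσdef] at hlt
      rw [lt_iSup_iff] at hlt
      obtain ⟨t, hlt2⟩ := hlt
      rw [lt_iSup_iff] at hlt2
      obtain ⟨htT, hlt3⟩ := hlt2
      exact ⟨t, htT, hlt3.le⟩
  choose tn htnT htnge using hseq
  set E : Set ℝ := ⋃ n, Vset g b s (tn n) with hE
  have hdir : Directed (· ⊆ ·) (fun n => Vset g b s (tn n)) := by
    intro m n
    rcases eq_or_ne (tn m) (tn n) with heq | hne
    · exact ⟨n, by simp only []; rw [heq], subset_rfl⟩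
    · rcases tri_total hg hb (hTS _ (htnT m)) (hTS _ (htnT n)) hne with h' | h'
      · exact ⟨m, subset_rfl, Vset_mono hg hb.1 h'⟩
      · exact ⟨n, Vset_mono hg hb.1 h', subset_rfl⟩
  have hEvol : volume E = ⨆ n, volume (Vset g b s (tn n)) := hdir.measure_iUnion
  have hEleσ : volume E ≤ σ := by
    rw [hEvol]
    exact iSup_le fun n =>
      le_iSup₂ (f := fun t (_ : t ∈ T) => volume (Vset g b s t)) (tn n) (htnT n)
  have hσleE : σ ≤ volume E := by
    refine ENNReal.le_of_forall_pos_le_add fun ε hε _ => ?_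
    obtain ⟨n, hn⟩ := ENNReal.exists_inv_nat_lt
      (show ((ε:ℝ≥0∞)) ≠ 0 by exact_mod_cast hε.ne')
    calc σ ≤ volume (Vset g b s (tn n)) + ((n:ℝ≥0∞)+1)⁻¹ := by
          rw [← tsub_le_iff_right]; exact htnge n
      _ ≤ volume E + ε := by
          refine add_le_add (measure_mono (subset_iUnion (fun k => Vset g b s (tn k)) n)) ?_
          refine le_trans ?_ hn.le
          exact ENNReal.inv_le_inv.2 le_self_add
  have hEσ : volume E = σ := le_antisymm hEleσ hσleE
  set P : Set ℝ := T \ E with hP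
  have hPsub : ∀ p ∈ P, E ⊆ Vset g b s p := by
    intro p hp
    refine iUnion_subset fun n => ?_
    rcases eq_or_ne (tn n) p with heq | hne
    · rw [heq]
    · rcases tri_total hg hb (hTS _ (htnT n)) (hTS _ hp.1) hne with h' | h'
      · exact absurd (mem_iUnion.2 ⟨n, h'⟩ : p ∈ E) hp.2
      · exact Vset_mono hg hb.1 h'
  have hPvol : ∀ p ∈ P, volume (Vset g b s p) = σ := by
    intro p hp
    refine le_antisymm ?_ ?_
    · exact le_iSup₂ (f := fun t (_ : t ∈ T) => volume (Vset g b s t)) p hp.1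
    · rw [← hEσ]; exact measure_mono (hPsub p hp)
  have hPnull3 : ∀ p ∈ P, ∀ q ∈ P, Tri g b s p q →
      volume {z | Tri g b s p z ∧ Tri g b s z q} = 0 := by
    intro p hp q hq hpq
    have hsub' : Vset g b s q ∪ {q} ⊆ Vset g b s p :=
      union_subset (Vset_mono hg hb.1 hpq) (singleton_subset_iff.2 hpq)
    have hBsub : {z | Tri g b s p z ∧ Tri g b s z q} ⊆
        Vset g b s p \ (Vset g b s q ∪ {q}) := by
      rintro z ⟨h1, h2⟩
      refine ⟨h1, ?_⟩
      rintro (h3 | h3)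
      · exact tri_antisymm hb.1 h2 h3
      · rw [mem_singleton_iff] at h3; subst h3; exact tri_irrefl h2
    refine le_antisymm (le_trans (measure_mono hBsub) ?_) zero_le
    rw [measure_diff hsub'
      (((Vset_meas hg q).union (measurableSet_singleton q)).nullMeasurableSet)
      ((lt_of_le_of_lt (le_trans (measure_mono hsub') (le_trans
        (measure_mono (Vset_sub hg p)) (le_of_eq (by rw [Real.volume_Icc]; norm_num))))
        ENNReal.one_lt_top).ne)]
    rw [hPvol p hp]
    have h1 : σ ≤ volume (Vset g b s q ∪ {q}) := by
      rw [← hPvol q hq]; exact measure_mono subset_union_left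
    exact le_trans (tsub_le_tsub le_rfl h1) (by simp)
  have hPnull := no_three_null (three_point hg hb (fun p hp => hTS p hp.1) hPnull3)
  calc volume T ≤ volume (E ∪ P) :=
        measure_mono (fun t ht => (em (t ∈ E)).elim Or.inl (fun h => Or.inr ⟨ht, h⟩))
    _ ≤ volume E + volume P := measure_union_le _ _
    _ = σ + 0 := by rw [hEσ, hPnull]
    _ = σ := add_zero σ
    _ ≤ c := hσc

/-! ### CDF computation -/

lemma T_measure (hg : IsCRT g) (hb : IsEnum g b) {x : ℝ} (hx0 : 0 ≤ x) (hx1 : x ≤ 1) :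
    volume {t | NotOneSidedMin g t ∧ volume (Uset g b s t) ≤ ENNReal.ofReal x} =
      ENNReal.ofReal x := by
  set T := {t | NotOneSidedMin g t ∧ volume (Uset g b s t) ≤ ENNReal.ofReal x} with hT
  set T' := {t | NotOneSidedMin g t ∧ ¬ (volume (Uset g b s t) ≤ ENNReal.ofReal x)} with hT'
  have hTmeas : MeasurableSet T := by
    have heq : T = {t | NotOneSidedMin g t} ∩
        (fun t => volume (Uset g b s t)) ⁻¹' (Iic (ENNReal.ofReal x)) := by
      ext t; simp only [hT, mem_setOf_eq, mem_inter_iff, mem_preimage, mem_Iic]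
    rw [heq]
    exact (Sset_meas hg).inter ((F_meas hg hb.1) measurableSet_Iic)
  have hT'meas : MeasurableSet T' := by
    have heq : T' = {t | NotOneSidedMin g t} \
        ((fun t => volume (Uset g b s t)) ⁻¹' (Iic (ENNReal.ofReal x))) := by
      ext t; simp only [hT', mem_setOf_eq, mem_diff, mem_preimage, mem_Iic]
    rw [heq]
    exact (Sset_meas hg).diff ((F_meas hg hb.1) measurableSet_Iic)
  have h1 : volume T ≤ ENNReal.ofReal x :=
    chain_bound hg hb (fun t ht => ht.1) (fun t ht => ht.2)
  have h2 : volume T' ≤ 1 - ENNReal.ofReal x := by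
    refine chain_bound_V (s := s) hg hb (fun t ht => ht.1) (fun t ht => ?_)
    have hpart := UV_partition (s := s) hg hb ht.1
    have hUge : ENNReal.ofReal x ≤ volume (Uset g b s t) := (not_le.1 ht.2).le
    have hle : volume (Vset g b s t) + ENNReal.ofReal x ≤ 1 := by
      calc volume (Vset g b s t) + ENNReal.ofReal x
          ≤ volume (Vset g b s t) + volume (Uset g b s t) := by gcongr
        _ = 1 := by rw [add_comm]; exact hpart
    exact ENNReal.le_sub_of_add_le_right ENNReal.ofReal_ne_top hle
  have hdisj : Disjoint T T' := Set.disjoint_left.2 fun t ht ht' => ht'.2 ht.2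
  have hunion : T ∪ T' = {t | NotOneSidedMin g t} := by
    ext t
    simp only [mem_union, hT, hT', mem_setOf_eq]
    constructor
    · rintro (h | h) <;> exact h.1
    · intro h
      by_cases hc : volume (Uset g b s t) ≤ ENNReal.ofReal x
      · exact Or.inl ⟨h, hc⟩
      · exact Or.inr ⟨h, hc⟩
  have hpartS : volume T + volume T' = 1 := by
    rw [← measure_union hdisj hT'meas, hunion]
    exact hg.leaves_full
  have hofx1 : ENNReal.ofReal x ≤ 1 := by
    rw [← ENNReal.ofReal_one]; exact ENNReal.ofReal_le_ofReal hx1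
  have hT'top : volume T' ≠ ⊤ :=
    (lt_of_le_of_lt h2 (lt_of_le_of_lt tsub_le_self ENNReal.one_lt_top)).ne
  have hTeq : volume T = 1 - volume T' := ENNReal.eq_sub_of_add_eq hT'top hpartS
  refine le_antisymm h1 ?_
  rw [hTeq]
  calc ENNReal.ofReal x = 1 - (1 - ENNReal.ofReal x) :=
        (ENNReal.sub_sub_cancel ENNReal.one_ne_top hofx1).symm
    _ ≤ 1 - volume T' := tsub_le_tsub le_rfl h2

end CRTShuffle

/-- `φ_{g,s}` preserves Lebesgue measure on `[0,1]`, hence `μ_{g,s}` is a permuton. -/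
theorem stmt3 (g : ℝ → ℝ) (hg : IsCRT g) (b : ℕ → ℝ) (hb : IsEnum g b) (s : ℕ → Bool) :
    Measure.map (phi g b s) (volume.restrict (Set.Icc 0 1)) = volume.restrict (Set.Icc 0 1) ∧
    Measure.map Prod.fst (permuton g b s) = volume.restrict (Set.Icc 0 1) ∧
    Measure.map Prod.snd (permuton g b s) = volume.restrict (Set.Icc 0 1) := by
  have hphi : ∀ t, phi g b s t = (volume (CRTShuffle.Uset g b s t)).toReal :=
    CRTShuffle.phi_eq' hg
  have hFmeas : Measurable (fun t => volume (CRTShuffle.Uset g b s t)) :=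
    CRTShuffle.F_meas hg hb.1
  have hphimeas : Measurable (phi g b s) := by
    have heq : phi g b s = fun t => (volume (CRTShuffle.Uset g b s t)).toReal := funext hphi
    rw [heq]
    exact hFmeas.ennreal_toReal
  haveI hfin : IsFiniteMeasure (volume.restrict (Set.Icc (0:ℝ) 1)) := by
    constructor
    rw [Measure.restrict_apply_univ, Real.volume_Icc]
    exact ENNReal.ofReal_lt_top
  haveI : IsFiniteMeasure (Measure.map (phi g b s) (volume.restrict (Set.Icc (0:ℝ) 1))) := by
    constructor
    rw [Measure.map_apply hphimeas MeasurableSet.univ]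
    exact measure_lt_top _ _
  have hmain : Measure.map (phi g b s) (volume.restrict (Set.Icc 0 1)) =
      volume.restrict (Set.Icc 0 1) := by
    refine Measure.ext_of_Iic _ _ (fun a => ?_)
    rw [Measure.map_apply hphimeas measurableSet_Iic,
      Measure.restrict_apply (hphimeas measurableSet_Iic),
      Measure.restrict_apply measurableSet_Iic]
    rcases lt_or_ge a 0 with ha | ha
    · have h1 : phi g b s ⁻¹' (Iic a) ∩ Icc 0 1 = (∅ : Set ℝ) := by
        ext t
        simp only [mem_inter_iff, mem_preimage, mem_Iic, mem_empty_iff_false, iff_false,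
          not_and, mem_Icc]
        intro h1
        exfalso
        have h0 : (0:ℝ) ≤ phi g b s t := by rw [hphi]; exact ENNReal.toReal_nonneg
        linarith
      have h2 : Iic a ∩ Icc (0:ℝ) 1 = (∅ : Set ℝ) := by
        ext t
        simp only [mem_inter_iff, mem_Iic, mem_Icc, mem_empty_iff_false, iff_false, not_and]
        intro h1 h2
        linarith
      rw [h1, h2]
    · rcases le_or_gt a 1 with ha1 | ha1
      · have hXsub : phi g b s ⁻¹' (Iic a) ∩ Icc 0 1 ⊆ Icc (0:ℝ) 1 := inter_subset_right
        have hXmeas : MeasurableSet (phi g b s ⁻¹' (Iic a) ∩ Icc (0:ℝ) 1) :=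
          (hphimeas measurableSet_Iic).inter measurableSet_Icc
        rw [← CRTShuffle.inter_S hg hXmeas hXsub]
        have hset : phi g b s ⁻¹' (Iic a) ∩ Icc (0:ℝ) 1 ∩ {x | NotOneSidedMin g x} =
            {t | NotOneSidedMin g t ∧
              volume (CRTShuffle.Uset g b s t) ≤ ENNReal.ofReal a} := by
          ext t
          simp only [mem_inter_iff, mem_preimage, mem_Iic, mem_setOf_eq, mem_Icc]
          constructor
          · rintro ⟨⟨hphile, -⟩, hS⟩
            refine ⟨hS, ?_⟩
            rw [hphi] at hphile
            exact (ENNReal.le_ofReal_iff_toReal_le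
              (lt_of_le_of_lt (CRTShuffle.F_le_one hg t) ENNReal.one_lt_top).ne ha).2 hphile
          · rintro ⟨hS, hle⟩
            refine ⟨⟨?_, ⟨hS.1.1.le, hS.1.2.le⟩⟩, hS⟩
            rw [hphi]
            exact ENNReal.toReal_le_of_le_ofReal ha hle
        rw [hset, CRTShuffle.T_measure hg hb ha ha1]
        have hIic : Iic a ∩ Icc (0:ℝ) 1 = Icc 0 a := by
          ext t
          simp only [mem_inter_iff, mem_Iic, mem_Icc]
          constructor
          · rintro ⟨h1, h2, h3⟩; exact ⟨h2, h1⟩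
          · rintro ⟨h1, h2⟩; exact ⟨h2, h1, le_trans h2 ha1⟩
        rw [hIic, Real.volume_Icc, sub_zero]
      · have h1 : phi g b s ⁻¹' (Iic a) ∩ Icc 0 1 = Icc (0:ℝ) 1 := by
          refine inter_eq_self_of_subset_right ?_
          intro t _
          simp only [mem_preimage, mem_Iic]
          have h2 : phi g b s t ≤ 1 := by
            rw [hphi]
            calc (volume (CRTShuffle.Uset g b s t)).toReal ≤ (1:ℝ≥0∞).toReal :=
                ENNReal.toReal_mono ENNReal.one_ne_top (CRTShuffle.F_le_one hg t)
              _ = 1 := by simp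
          linarith
        have h2 : Iic a ∩ Icc (0:ℝ) 1 = Icc (0:ℝ) 1 :=
          inter_eq_self_of_subset_right (fun t ht => le_trans ht.2 ha1.le)
        rw [h1, h2]
  refine ⟨hmain, ?_, ?_⟩
  · unfold permuton
    rw [Measure.map_map measurable_fst (measurable_id'.prodMk hphimeas)]
    have heq : (Prod.fst ∘ fun t : ℝ => (t, phi g b s t)) = id := rfl
    rw [heq, Measure.map_id]
  · unfold permuton
    rw [Measure.map_map measurable_snd (measurable_id'.prodMk hphimeas)]
    have heq : (Prod.snd ∘ fun t : ℝ => (t, phi g b s t)) = phi g b s := rfl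
    rw [heq]
    exact hmain


end
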